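/- arXiv:0803.0153 — 12 statements merged into one kernel-verified Lean document; each statement's English description precedes it below -/
import Mathlib

section
/- For all real rates λ, μ with 0 ≤ μ < λ and every integer n ≥ 1, the function q_or(t|n) := n λ^n (λ−μ)^2 (1−e^{−(λ−μ)t})^{n−1} e^{−(λ−μ)t} / (λ − μ e^{−(λ−μ)t})^{n+1} is nonnegative on (0,∞) and its integral over t from 0 to ∞ equals 1 (i.e., it is a probability density on (0,∞)). -/
open Real MeasureTheory

theorem stmt_2 (la mu : ℝ) (hmu : 0 ≤ mu) (hml : mu < la) (n : ℕ) (hn : 1 ≤ n) :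
    (∀ t ∈ Set.Ioi (0:ℝ),
        0 ≤ n * la ^ n * (la - mu) ^ 2 * (1 - exp (-(la - mu) * t)) ^ (n - 1) *
          exp (-(la - mu) * t) / (la - mu * exp (-(la - mu) * t)) ^ (n + 1)) ∧
      ∫ t in Set.Ioi (0:ℝ),
        n * la ^ n * (la - mu) ^ 2 * (1 - exp (-(la - mu) * t)) ^ (n - 1) *
          exp (-(la - mu) * t) / (la - mu * exp (-(la - mu) * t)) ^ (n + 1) = 1 := by
  obtain ⟨m, rfl⟩ : ∃ m, n = m + 1 := ⟨n - 1, (Nat.succ_pred_eq_of_pos hn).symm⟩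
  have hla : 0 < la := lt_of_le_of_lt hmu hml
  have hr0 : (0:ℝ) < la - mu := by linarith
  have hE : ∀ t : ℝ, 0 ≤ t → exp (-(la - mu) * t) ≤ 1 := by
    intro t ht
    rw [exp_le_one_iff]
    have : 0 ≤ (la - mu) * t := mul_nonneg hr0.le ht
    linarith [neg_mul (la - mu) t]
  have hD : ∀ t : ℝ, 0 ≤ t → 0 < la - mu * exp (-(la - mu) * t) := by
    intro t ht
    have h1 : mu * exp (-(la - mu) * t) ≤ mu * 1 := by
      apply mul_le_mul_of_nonneg_left (hE t ht) hmu
    nlinarith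
  -- Nonnegativity of the density on (0, ∞)
  have hpos : ∀ t ∈ Set.Ioi (0:ℝ),
      0 ≤ (m + 1 : ℕ) * la ^ (m + 1) * (la - mu) ^ 2 *
          (1 - exp (-(la - mu) * t)) ^ (m + 1 - 1) * exp (-(la - mu) * t) /
          (la - mu * exp (-(la - mu) * t)) ^ (m + 1 + 1) := by
    intro t ht
    have ht' : (0:ℝ) ≤ t := (le_of_lt ht)
    refine div_nonneg ?_ (pow_nonneg (hD t ht').le _)
    refine mul_nonneg (mul_nonneg (mul_nonneg (by positivity) (by positivity))
      (pow_nonneg (by linarith [hE t ht']) _)) (exp_pos _).le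
  refine ⟨hpos, ?_⟩
  -- antiderivative
  set F : ℝ → ℝ := fun t =>
    (la * (1 - exp (-(la - mu) * t)) / (la - mu * exp (-(la - mu) * t))) ^ (m + 1) with hF
  have hderiv : ∀ x ∈ Set.Ici (0:ℝ), HasDerivAt F
      ((m + 1 : ℕ) * la ^ (m + 1) * (la - mu) ^ 2 *
        (1 - exp (-(la - mu) * x)) ^ (m + 1 - 1) * exp (-(la - mu) * x) /
        (la - mu * exp (-(la - mu) * x)) ^ (m + 1 + 1)) x := by
    intro x hx
    have hDx : (la - mu * exp (-(la - mu) * x)) ≠ 0 := ne_of_gt (hD x hx)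
    have he : HasDerivAt (fun t : ℝ => exp (-(la - mu) * t))
        (-(la - mu) * exp (-(la - mu) * x)) x := by
      have := (hasDerivAt_id x).const_mul (-(la - mu))
      simpa [mul_comm] using (this.exp)
    have hN : HasDerivAt (fun t : ℝ => la * (1 - exp (-(la - mu) * t)))
        (la * ((la - mu) * exp (-(la - mu) * x))) x := by
      have := ((hasDerivAt_const x (1:ℝ)).sub he).const_mul la
      exact this.congr_deriv (by ring)
    have hDd : HasDerivAt (fun t : ℝ => la - mu * exp (-(la - mu) * t))
        (mu * (la - mu) * exp (-(la - mu) * x)) x := by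
      have := (hasDerivAt_const x la).sub (he.const_mul mu)
      exact this.congr_deriv (by ring)
    have hq : HasDerivAt (fun t : ℝ =>
        la * (1 - exp (-(la - mu) * t)) / (la - mu * exp (-(la - mu) * t)))
        ((la * ((la - mu) * exp (-(la - mu) * x)) * (la - mu * exp (-(la - mu) * x)) -
          la * (1 - exp (-(la - mu) * x)) * (mu * (la - mu) * exp (-(la - mu) * x))) /
          (la - mu * exp (-(la - mu) * x)) ^ 2) x := hN.div hDd hDx
    have hnum : la * ((la - mu) * exp (-(la - mu) * x)) * (la - mu * exp (-(la - mu) * x)) -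
        la * (1 - exp (-(la - mu) * x)) * (mu * (la - mu) * exp (-(la - mu) * x)) =
        la * (la - mu) ^ 2 * exp (-(la - mu) * x) := by ring
    have := hq.pow (m + 1)
    rw [hnum] at this
    refine this.congr_deriv ?_
    simp only [Nat.add_sub_cancel, div_pow, mul_pow]
    field_simp
    ring
  have hlim : Filter.Tendsto F Filter.atTop (nhds 1) := by
    have h0 : Filter.Tendsto (fun t : ℝ => exp (-(la - mu) * t)) Filter.atTop (nhds 0) := by
      have h1 : Filter.Tendsto (fun t : ℝ => (la - mu) * t) Filter.atTop Filter.atTop :=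
        Filter.Tendsto.const_mul_atTop hr0 Filter.tendsto_id
      have h2 : Filter.Tendsto (fun t : ℝ => -(la - mu) * t) Filter.atTop Filter.atBot := by
        have heq : (fun t : ℝ => -(la - mu) * t) = fun t : ℝ => -((la - mu) * t) := by
          funext t; ring
        rw [heq]
        exact Filter.tendsto_neg_atTop_atBot.comp h1
      exact Real.tendsto_exp_atBot.comp h2
    have hg : Filter.Tendsto (fun t : ℝ =>
        la * (1 - exp (-(la - mu) * t)) / (la - mu * exp (-(la - mu) * t)))
        Filter.atTop (nhds 1) := by
      have := (((tendsto_const_nhds (x := (1:ℝ))).sub h0).const_mul la).div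
        ((tendsto_const_nhds (x := la)).sub (h0.const_mul mu)) (by simpa using hla.ne')
      simpa [div_self hla.ne', Pi.div_def] using this
    have := hg.pow (m + 1)
    rw [one_pow] at this
    exact this
  have key := integral_Ioi_of_hasDerivAt_of_nonneg' hderiv hpos hlim
  rw [key, hF]
  simp
end

section
/- For all real rates λ, μ with 0 ≤ μ < λ and every integer n ≥ 1, the function Q_or(t|n) := (λ(1−e^{−(λ−μ)t})/(λ − μ e^{−(λ−μ)t}))^n satisfies: (i) for every t > 0, its derivative at t equals q_or(t|n) := n λ^n (λ−μ)^2 (1−e^{−(λ−μ)t})^{n−1} e^{−(λ−μ)t} / (λ − μ e^{−(λ−μ)t})^{n+1}; and (ii) Q_or(t|n) tends to 1 as t → ∞. -/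
open Real Filter

theorem stmt_3 (la mu : ℝ) (hmu : 0 ≤ mu) (hml : mu < la) (n : ℕ) (hn : 1 ≤ n) :
    (∀ t : ℝ, 0 < t →
        HasDerivAt
          (fun t : ℝ =>
            (la * (1 - exp (-(la - mu) * t)) / (la - mu * exp (-(la - mu) * t))) ^ n)
          (n * la ^ n * (la - mu) ^ 2 * (1 - exp (-(la - mu) * t)) ^ (n - 1) *
            exp (-(la - mu) * t) / (la - mu * exp (-(la - mu) * t)) ^ (n + 1))
          t) ∧
      Tendsto
        (fun t : ℝ =>
          (la * (1 - exp (-(la - mu) * t)) / (la - mu * exp (-(la - mu) * t))) ^ n)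
        atTop (nhds 1) := by
  obtain ⟨m, rfl⟩ : ∃ m, n = m + 1 := ⟨n - 1, (Nat.succ_pred_eq_of_pos hn).symm⟩
  have hc : 0 < la - mu := sub_pos.mpr hml
  have hla : 0 < la := lt_of_le_of_lt hmu hml
  constructor
  · intro t ht
    have hE1 : exp (-(la - mu) * t) < 1 := by
      rw [← Real.exp_zero]
      exact exp_lt_exp.mpr (by nlinarith)
    have hD : 0 < la - mu * exp (-(la - mu) * t) := by
      nlinarith [exp_pos (-(la - mu) * t)]
    have hDne : la - mu * exp (-(la - mu) * t) ≠ 0 := ne_of_gt hD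
    have hexp : HasDerivAt (fun t : ℝ => exp (-(la - mu) * t))
        (exp (-(la - mu) * t) * (-(la - mu))) t := by
      simpa using ((hasDerivAt_id t).const_mul (-(la - mu))).exp
    have hnum := ((hasDerivAt_const t (1:ℝ)).sub hexp).const_mul la
    have hden := (hasDerivAt_const t la).sub (hexp.const_mul mu)
    have hdiv := (hnum.div hden hDne).fun_pow (m + 1)
    convert hdiv using 1
    · rfl
    · rfl
    · rfl
    simp only [Pi.div_apply, Pi.sub_apply]
    have hEpos := exp_pos (-(la - mu) * t)
    generalize exp (-(la - mu) * t) = E at hDne hEpos ⊢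
    simp only [Nat.add_sub_cancel]
    field_simp
    rw [div_pow, mul_pow]
    field_simp
    ring
  · have hlin : Tendsto (fun t : ℝ => -(la - mu) * t) atTop atBot := by
      simp only [neg_mul]
      exact tendsto_neg_atBot_iff.mpr (Tendsto.const_mul_atTop hc tendsto_id)
    have hlim : Tendsto (fun t : ℝ => exp (-(la - mu) * t)) atTop (nhds 0) :=
      Real.tendsto_exp_atBot.comp hlin
    have h1 : Tendsto (fun t : ℝ =>
        la * (1 - exp (-(la - mu) * t)) / (la - mu * exp (-(la - mu) * t))) atTop (nhds 1) := by
      have h2 : Tendsto (fun t : ℝ => la * (1 - exp (-(la - mu) * t))) atTop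
          (nhds (la * (1 - 0))) := (tendsto_const_nhds.sub hlim).const_mul la
      have h3 : Tendsto (fun t : ℝ => la - mu * exp (-(la - mu) * t)) atTop
          (nhds (la - mu * 0)) := tendsto_const_nhds.sub (hlim.const_mul mu)
      have := h2.div h3 (by simpa using ne_of_gt hla)
      simpa [Pi.div_def, div_self (ne_of_gt hla)] using this
    simpa using h1.pow (m + 1)
end

section
/- For all real rates λ, μ with 0 ≤ μ < λ, integers n ≥ 2 and 1 ≤ k ≤ n−1, and every s > 0, the integral over t from s to ∞ of f_{A_{n,t}^k}(s) · q_or(t|n), where f_{A_{n,t}^k}(s) := k·C(n−1,k)·(λ−μ)^{k+1}·(e^{−(λ−μ)s} − e^{−(λ−μ)t})^{k−1}·e^{−(λ−μ)s}·(λ − μ e^{−(λ−μ)t})^{n−k}·(1 − e^{−(λ−μ)s})^{n−k−1} / ((λ − μ e^{−(λ−μ)s})^n · (1 − e^{−(λ−μ)t})^{n−1}) and q_or(t|n) := n λ^n (λ−μ)^2 (1−e^{−(λ−μ)t})^{n−1} e^{−(λ−μ)t} / (λ − μ e^{−(λ−μ)t})^{n+1}, equals (k+1)·C(n,k+1)·λ^{n−k}·(λ−μ)^{k+2}·e^{−(λ−μ)(k+1)s}·(1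 − e^{−(λ−μ)s})^{n−k−1} / (λ − μ e^{−(λ−μ)s})^{n+1}. -/
open Real MeasureTheory

set_option maxHeartbeats 1000000 in
private lemma stmt6_aux1 (k' d : ℕ) (c1 a u la mu r : ℝ) (D : ℝ)
    (hD : D = c1 * r ^ (k' + 3) * a * (1 - a) ^ d * ((k' : ℝ) + 2 + d) *
      la ^ (k' + 2 + d) / (la - mu * a) ^ (k' + 3 + d))
    (h4 : (1:ℝ) - u ≠ 0) (h5 : la - mu * a ≠ 0) (h6 : la - mu * u ≠ 0) :
    ↑(k' + 1) * c1 * r ^ (k' + 2) * (a - u) ^ k' * a *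
              (la - mu * u) ^ (d + 1) * (1 - a) ^ d /
          ((la - mu * a) ^ (k' + 2 + d) * (1 - u) ^ (k' + 1 + d)) *
        (↑(k' + 2 + d) * la ^ (k' + 2 + d) * r ^ 2 * (1 - u) ^ (k' + 1 + d) *
            u / (la - mu * u) ^ (k' + 2 + d + 1)) =
      D * (↑(k' + 1) * ((a - u) / (la - mu * u)) ^ (k' + 1 - 1) *
        ((r * u * (la - mu * u) - (a - u) * (mu * r * u)) / (la - mu * u) ^ 2)) := by
  rw [hD]
  simp only [Nat.add_sub_cancel]
  rw [show k' + 3 + d = (k' + 2 + d) + 1 by omega, pow_succ (la - mu * a) (k' + 2 + d),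
    show k' + 2 + d + 1 = (d + 1) + (k' + 2) by omega, pow_add (la - mu * u) (d + 1) (k' + 2),
    div_pow, show r * u * (la - mu * u) - (a - u) * (mu * r * u) = r * u * (la - mu * a) by ring]
  generalize la - mu * a = X at *
  generalize la - mu * u = Y at *
  generalize 1 - u = Z at *
  push_cast
  field_simp
  ring

set_option maxHeartbeats 1000000 in
private lemma stmt6_aux2 (k' d : ℕ) (c1 a la mu r : ℝ) (hla : la ≠ 0) (h5 : la - mu * a ≠ 0)
    (h8 : (k' : ℝ) + 2 ≠ 0) :
    c1 * r ^ (k' + 3) * a * (1 - a) ^ d * ((k' : ℝ) + 2 + d) * la ^ (k' + 2 + d) /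
        (la - mu * a) ^ (k' + 3 + d) * (a / la) ^ (k' + 1)
    = (↑(k' + 1) + 1) * (c1 * ((k' : ℝ) + 2 + d) / ((k' : ℝ) + 2)) * la ^ (d + 1) * r ^ (k' + 3) *
        a ^ (k' + 2) * (1 - a) ^ d / (la - mu * a) ^ (k' + 2 + d + 1) := by
  rw [div_pow]
  push_cast
  field_simp
  ring

set_option maxHeartbeats 1000000 in
theorem stmt_6 (la mu : ℝ) (hmu : 0 ≤ mu) (hml : mu < la) (n k : ℕ)
    (hn : 2 ≤ n) (hk1 : 1 ≤ k) (hk2 : k ≤ n - 1) (s : ℝ) (hs : 0 < s) :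
    ∫ t in Set.Ioi s,
      (k * (n - 1).choose k * (la - mu) ^ (k + 1) *
          (exp (-(la - mu) * s) - exp (-(la - mu) * t)) ^ (k - 1) *
          exp (-(la - mu) * s) * (la - mu * exp (-(la - mu) * t)) ^ (n - k) *
          (1 - exp (-(la - mu) * s)) ^ (n - k - 1) /
          ((la - mu * exp (-(la - mu) * s)) ^ n * (1 - exp (-(la - mu) * t)) ^ (n - 1))) *
        (n * la ^ n * (la - mu) ^ 2 * (1 - exp (-(la - mu) * t)) ^ (n - 1) *
          exp (-(la - mu) * t) / (la - mu * exp (-(la - mu) * t)) ^ (n + 1))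
      = (k + 1) * n.choose (k + 1) * la ^ (n - k) * (la - mu) ^ (k + 2) *
          exp (-(la - mu) * ((k + 1) * s)) * (1 - exp (-(la - mu) * s)) ^ (n - k - 1) /
          (la - mu * exp (-(la - mu) * s)) ^ (n + 1) := by
  obtain ⟨k', rfl⟩ : ∃ k', k = k' + 1 := ⟨k - 1, by omega⟩
  obtain ⟨d, rfl⟩ : ∃ d, n = k' + 2 + d := ⟨n - (k' + 2), by omega⟩
  simp only [show k' + 2 + d - 1 = k' + 1 + d from by omega,
    show k' + 2 + d - (k' + 1) = d + 1 from by omega,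
    show d + 1 - 1 = d from by omega,
    show k' + 1 - 1 = k' from by omega,
    show k' + 1 + 1 = k' + 2 from by omega,
    show k' + 1 + 2 = k' + 3 from by omega]
  set r := la - mu with hrdef
  set a := Real.exp (-r * s) with hadef
  have hr : 0 < r := sub_pos.mpr hml
  have hla : 0 < la := hmu.trans_lt hml
  have ha0 : 0 < a := exp_pos _
  have ha1 : a < 1 := by
    rw [hadef, exp_lt_one_iff]
    nlinarith
  have hda : 0 < la - mu * a := by nlinarith
  clear_value r a
  set C1 : ℝ := ((k' + 1 + d).choose (k' + 1) : ℝ) with hC1def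
  set D : ℝ := C1 * r ^ (k' + 3) * a * (1 - a) ^ d * ((k' : ℝ) + 2 + d) *
      la ^ (k' + 2 + d) / (la - mu * a) ^ (k' + 3 + d) with hDdef
  clear_value C1 D
  -- basic facts about exp(-r t) for t > s
  have hexp : ∀ t : ℝ, HasDerivAt (fun t : ℝ => Real.exp (-r * t))
      (-r * Real.exp (-r * t)) t := by
    intro t
    have h := ((hasDerivAt_id t).const_mul (-r)).exp
    simpa [mul_comm] using h
  set F : ℝ → ℝ := fun t =>
    D * ((a - Real.exp (-r * t)) / (la - mu * Real.exp (-r * t))) ^ (k' + 1) with hFdef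
  clear_value F
  have hfacts : ∀ t ∈ Set.Ioi s, Real.exp (-r * t) < a ∧ Real.exp (-r * t) < 1 ∧
      0 < la - mu * Real.exp (-r * t) := by
    intro t ht
    have ht' : s < t := ht
    have h1 : Real.exp (-r * t) < a := by
      rw [hadef]
      apply exp_lt_exp.mpr
      nlinarith
    have h2 : Real.exp (-r * t) < 1 := h1.trans ha1
    refine ⟨h1, h2, ?_⟩
    have := (exp_pos (-r * t)).le
    nlinarith
  have hderiv : ∀ t ∈ Set.Ioi s, HasDerivAt F
      (↑(k' + 1) * C1 * r ^ (k' + 2) *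
              (a - Real.exp (-r * t)) ^ k' * a *
              (la - mu * Real.exp (-r * t)) ^ (d + 1) * (1 - a) ^ d /
          ((la - mu * a) ^ (k' + 2 + d) * (1 - Real.exp (-r * t)) ^ (k' + 1 + d)) *
        (↑(k' + 2 + d) * la ^ (k' + 2 + d) * r ^ 2 * (1 - Real.exp (-r * t)) ^ (k' + 1 + d) *
            Real.exp (-r * t) / (la - mu * Real.exp (-r * t)) ^ (k' + 2 + d + 1))) t := by
    intro t ht
    obtain ⟨h1, h2, h3⟩ := hfacts t ht
    have hd1 : HasDerivAt (fun t : ℝ => a - Real.exp (-r * t)) (r * Real.exp (-r * t)) t := by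
      have := (hexp t).const_sub a
      refine this.congr_deriv ?_
      ring
    have hd2 : HasDerivAt (fun t : ℝ => la - mu * Real.exp (-r * t))
        (mu * r * Real.exp (-r * t)) t := by
      have := ((hexp t).const_mul mu).const_sub la
      refine this.congr_deriv ?_
      ring
    have hd3 := hd1.div hd2 h3.ne'
    have hd4 := (hd3.pow (k' + 1)).const_mul D
    have h4 : (1 : ℝ) - Real.exp (-r * t) ≠ 0 := by nlinarith
    have h5 : la - mu * a ≠ 0 := hda.ne'
    have h6 : la - mu * Real.exp (-r * t) ≠ 0 := h3.ne'
    rw [hFdef]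
    refine hd4.congr_deriv ?_
    exact (stmt6_aux1 k' d C1 a (Real.exp (-r * t)) la mu r D hDdef h4 h5 h6).symm
  have hpos : ∀ t ∈ Set.Ioi s,
      0 ≤ ↑(k' + 1) * C1 * r ^ (k' + 2) *
              (a - Real.exp (-r * t)) ^ k' * a *
              (la - mu * Real.exp (-r * t)) ^ (d + 1) * (1 - a) ^ d /
          ((la - mu * a) ^ (k' + 2 + d) * (1 - Real.exp (-r * t)) ^ (k' + 1 + d)) *
        (↑(k' + 2 + d) * la ^ (k' + 2 + d) * r ^ 2 * (1 - Real.exp (-r * t)) ^ (k' + 1 + d) *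
            Real.exp (-r * t) / (la - mu * Real.exp (-r * t)) ^ (k' + 2 + d + 1)) := by
    intro t ht
    obtain ⟨h1, h2, h3⟩ := hfacts t ht
    have h4 : (0:ℝ) ≤ a - Real.exp (-r * t) := by linarith
    have h5 : (0:ℝ) ≤ 1 - Real.exp (-r * t) := by linarith
    have h6 : (0:ℝ) ≤ 1 - a := by linarith
    have h7 : (0:ℝ) ≤ Real.exp (-r * t) := (exp_pos _).le
    have hC10 : (0:ℝ) ≤ C1 := by rw [hC1def]; positivity
    apply mul_nonneg <;> apply div_nonneg <;>
      apply_rules [mul_nonneg, pow_nonneg, Nat.cast_nonneg, hr.le, hla.le, ha0.le, hda.le,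
        h3.le, hC10]
  have hlim : Filter.Tendsto (fun t : ℝ => Real.exp (-r * t)) Filter.atTop (nhds 0) := by
    rw [Real.tendsto_exp_comp_nhds_zero]
    exact Filter.Tendsto.const_mul_atTop_of_neg (by linarith) Filter.tendsto_id
  have htend : Filter.Tendsto F Filter.atTop (nhds (D * (a / la) ^ (k' + 1))) := by
    rw [hFdef]
    have : Filter.Tendsto (fun t : ℝ =>
        D * ((a - Real.exp (-r * t)) / (la - mu * Real.exp (-r * t))) ^ (k' + 1))
        Filter.atTop (nhds (D * ((a - 0) / (la - mu * 0)) ^ (k' + 1))) := by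
      apply Filter.Tendsto.const_mul
      apply Filter.Tendsto.pow
      apply Filter.Tendsto.div (tendsto_const_nhds.sub hlim)
        (tendsto_const_nhds.sub (hlim.const_mul mu))
      simpa using hla.ne'
    simpa using this
  have hcont : ContinuousWithinAt F (Set.Ici s) s := by
    rw [hFdef]
    apply ContinuousAt.continuousWithinAt
    have hc : ContinuousAt (fun t : ℝ => Real.exp (-r * t)) s := by fun_prop
    apply ContinuousAt.mul continuousAt_const
    apply ContinuousAt.pow
    apply ContinuousAt.div (continuousAt_const.sub hc) (continuousAt_const.sub (hc.const_mul mu))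
    show la - mu * Real.exp (-r * s) ≠ 0
    rw [← hadef]
    exact hda.ne'
  have key := integral_Ioi_of_hasDerivAt_of_nonneg hcont hderiv hpos htend
  rw [key]
  have hFs : F s = 0 := by
    rw [hFdef]
    show D * ((a - Real.exp (-r * s)) / (la - mu * Real.exp (-r * s))) ^ (k' + 1) = 0
    rw [← hadef, sub_self, zero_div, zero_pow (Nat.succ_ne_zero k'), mul_zero]
  rw [hFs, sub_zero]
  have hexp2 : Real.exp (-r * ((((k' + 1 : ℕ) : ℝ) + 1) * s)) = a ^ (k' + 2) := by
    rw [hadef, ← Real.exp_nat_mul]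
    congr 1
    push_cast
    ring
  rw [hexp2]
  have hch2 : (((k' + 2 + d).choose (k' + 2) : ℕ) : ℝ) =
      C1 * ((k' : ℝ) + 2 + d) / ((k' : ℝ) + 2) := by
    rw [eq_div_iff (by positivity), hC1def]
    have h := Nat.add_one_mul_choose_eq (k' + 1 + d) (k' + 1)
    rw [show k' + 1 + d + 1 = k' + 2 + d from by omega,
      show k' + 1 + 1 = k' + 2 from by omega] at h
    have h' : ((k' + 2 + d : ℕ) : ℝ) * ((k' + 1 + d).choose (k' + 1) : ℝ) =
        ((k' + 2 + d).choose (k' + 2) : ℝ) * ((k' + 2 : ℕ) : ℝ) := by exact_mod_cast h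
    push_cast at h' ⊢
    linarith [h']
  rw [hch2, hDdef]
  exact stmt6_aux2 k' d C1 a la mu r hla.ne' hda.ne' (by positivity)
end

section
/- For all real rates λ, μ with 0 ≤ μ < λ, every integer k ≥ 1, and every s > 0, the integral over t from s to ∞ of (1 − e^{−(λ−μ)(t−s)})^{k−1} · e^{−(λ−μ)t} / (λ − μ e^{−(λ−μ)t})^{k+1} equals e^{−(λ−μ)s} / (k (λ−μ) (λ − μ e^{−(λ−μ)s}) λ^k). -/
open Real MeasureTheory Filter

theorem stmt_7 (la mu : ℝ) (hmu : 0 ≤ mu) (hml : mu < la) (k : ℕ) (hk : 1 ≤ k)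
    (s : ℝ) (hs : 0 < s) :
    ∫ t in Set.Ioi s,
      (1 - exp (-(la - mu) * (t - s))) ^ (k - 1) * exp (-(la - mu) * t) /
        (la - mu * exp (-(la - mu) * t)) ^ (k + 1)
      = exp (-(la - mu) * s) /
          (k * (la - mu) * (la - mu * exp (-(la - mu) * s)) * la ^ k) := by
  obtain ⟨m, rfl⟩ : ∃ m, k = m + 1 := ⟨k - 1, (Nat.succ_pred_eq_of_pos hk).symm⟩
  set a := la - mu with ha_def
  have ha : 0 < a := by simp only [ha_def]; linarith
  clear_value a
  have hla : 0 < la := lt_of_le_of_lt hmu hml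
  have hD : ∀ t : ℝ, 0 ≤ t → 0 < la - mu * exp (-a * t) := by
    intro t ht
    have h1 : exp (-a * t) ≤ 1 := exp_le_one_iff.mpr (by nlinarith)
    nlinarith [exp_pos (-a * t)]
  have hC : 0 < la * exp (a * s) - mu := by
    have : (1:ℝ) < exp (a * s) := by rw [one_lt_exp_iff]; positivity
    nlinarith
  set C : ℝ := ((m:ℝ) + 1) * a * (la * exp (a * s) - mu) with hC_def
  have hCpos : 0 < C := by rw [hC_def]; positivity
  clear_value C
  set f : ℝ → ℝ := fun t =>
    ((1 - exp (-a * (t - s))) / (la - mu * exp (-a * t))) ^ (m + 1) / C with hf_def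
  have hderiv : ∀ t ∈ Set.Ici s, HasDerivAt f
      ((1 - exp (-a * (t - s))) ^ (m + 1 - 1) * exp (-a * t) /
        (la - mu * exp (-a * t)) ^ (m + 1 + 1)) t := by
    intro t ht
    have hts : 0 ≤ t := le_trans hs.le ht
    have hDt := hD t hts
    have hN : HasDerivAt (fun t => 1 - exp (-a * (t - s))) (a * exp (-a * (t - s))) t := by
      have h1 : HasDerivAt (fun t : ℝ => -a * (t - s)) (-a) t := by
        simpa using (((hasDerivAt_id t).sub_const s).const_mul (-a))
      simpa [mul_comm] using (h1.exp.const_sub 1)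
    have hDd : HasDerivAt (fun t => la - mu * exp (-a * t)) (a * mu * exp (-a * t)) t := by
      have h1 : HasDerivAt (fun t : ℝ => -a * t) (-a) t := by
        simpa using ((hasDerivAt_id t).const_mul (-a))
      have := (h1.exp.const_mul mu).const_sub la
      exact this.congr_deriv (by ring)
    have hq := (hN.div hDd hDt.ne').pow (m + 1)
    have h2 := hq.div_const C
    refine h2.congr_deriv ?_
    symm
    simp only [Pi.div_apply]
    rw [hC_def]
    have hexp : exp (-a * (t - s)) = exp (-a * t) * exp (a * s) := by
      rw [← exp_add]; ring_nf
    simp only [Nat.add_sub_cancel]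
    rw [hexp]
    set E := exp (-a * t) with hE
    set S := exp (a * s) with hS
    have hDne : la - mu * E ≠ 0 := ne_of_gt hDt
    have hSC : la * S - mu ≠ 0 := ne_of_gt hC
    have hm1 : ((m:ℝ) + 1) ≠ 0 := by positivity
    rw [div_pow, show a * (E * S) * (la - mu * E) - (1 - E * S) * (a * mu * E)
        = a * E * (la * S - mu) from by ring]
    push_cast
    generalize la - mu * E = D at *
    generalize la * S - mu = Q at *
    field_simp
    ring
  have hnonneg : ∀ t ∈ Set.Ioi s,
      0 ≤ (1 - exp (-a * (t - s))) ^ (m + 1 - 1) * exp (-a * t) /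
        (la - mu * exp (-a * t)) ^ (m + 1 + 1) := by
    intro t ht
    have hts : s < t := ht
    have h1 : exp (-a * (t - s)) ≤ 1 := exp_le_one_iff.mpr (by nlinarith)
    have hDt := hD t (by linarith)
    apply div_nonneg
    · exact mul_nonneg (pow_nonneg (by linarith) _) (exp_pos _).le
    · exact (pow_pos hDt _).le
  have htends : Tendsto f atTop (nhds ((1 / la) ^ (m + 1) / C)) := by
    have h0 : Tendsto (fun t : ℝ => exp (-a * (t - s))) atTop (nhds 0) := by
      apply Real.tendsto_exp_atBot.comp
      exact (tendsto_const_mul_atBot_of_neg (neg_lt_zero.mpr ha)).mpr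
        (tendsto_atTop_add_const_right atTop (-s) tendsto_id)
    have h0' : Tendsto (fun t : ℝ => exp (-a * t)) atTop (nhds 0) := by
      apply Real.tendsto_exp_atBot.comp
      exact (tendsto_const_mul_atBot_of_neg (neg_lt_zero.mpr ha)).mpr tendsto_id
    have hmain : Tendsto (fun t =>
        ((1 - exp (-a * (t - s))) / (la - mu * exp (-a * t))) ^ (m + 1))
        atTop (nhds ((1 / la) ^ (m + 1))) := by
      apply Tendsto.pow
      have hnum : Tendsto (fun t => 1 - exp (-a * (t - s))) atTop (nhds 1) := by
        simpa using (tendsto_const_nhds.sub h0)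
      have hden : Tendsto (fun t => la - mu * exp (-a * t)) atTop (nhds la) := by
        simpa using tendsto_const_nhds.sub (h0'.const_mul mu)
      exact hnum.div hden hla.ne'
    exact hmain.div_const C
  have key := integral_Ioi_of_hasDerivAt_of_nonneg' hderiv hnonneg htends
  rw [key]
  have hfs : f s = 0 := by simp [hf_def]
  rw [hfs, sub_zero]
  have hDs := hD s hs.le
  push_cast
  rw [hC_def]
  have hd2 : (0:ℝ) < ((m:ℝ) + 1) * a * (la - mu * exp (-a * s)) * la ^ (m + 1) :=
    mul_pos (mul_pos (mul_pos (by positivity) ha) hDs) (pow_pos hla _)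
  have hCpos' : (0:ℝ) < ((m:ℝ) + 1) * a * (la * exp (a * s) - mu) := by positivity
  rw [div_eq_div_iff hCpos'.ne' hd2.ne']
  have hpow : (1 / la) ^ (m + 1) * la ^ (m + 1) = 1 := by
    rw [div_pow, one_pow, div_mul_cancel₀]
    exact pow_ne_zero _ hla.ne'
  have huv : exp (a * s) * exp (-a * s) = 1 := by
    rw [← exp_add]; simp
  linear_combination (((m:ℝ) + 1) * a * (la - mu * exp (-a * s))) * hpow -
    (((m:ℝ) + 1) * a * la) * huv
end

section
/- For all real rates λ, μ with 0 ≤ μ < λ and integers n ≥ 2, 1 ≤ k ≤ n−1, the integral over s from 0 to ∞ of (k+1)·C(n,k+1)·λ^{n−k}·(λ−μ)^{k+2}·e^{−(λ−μ)(k+1)s}·(1 − e^{−(λ−μ)s})^{n−k−1} / (λ − μ e^{−(λ−μ)s})^{n+1} equals 1. -/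
open Real MeasureTheory Set

lemma prod_aux (a b : ℕ) : a.factorial * ∏ j ∈ Finset.range (b+1), (a+1+j) = (a+b+1).factorial := by
  induction b with
  | zero => simp [Nat.factorial_succ, mul_comm]
  | succ b ih =>
      rw [Finset.prod_range_succ, ← mul_assoc, ih,
        show a + (b+1) + 1 = (a+b+1) + 1 from by omega,
        show a + 1 + (b+1) = (a+b+1) + 1 from by omega,
        Nat.factorial_succ (a+b+1)]
      ring

lemma beta_nat (a b : ℕ) : ∫ x in (0:ℝ)..1, x ^ a * (1 - x) ^ b
    = (a.factorial * b.factorial : ℝ) / (a + b + 1).factorial := by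
  have hre : 0 < Complex.re ((a:ℂ)+1) := by
    simp only [Complex.add_re, Complex.natCast_re, Complex.one_re]
    positivity
  have h := Complex.betaIntegral_eval_nat_add_one_right hre b
  rw [Complex.betaIntegral] at h
  simp only [add_sub_cancel_right] at h
  have hint : (∫ x in (0:ℝ)..1, (x:ℂ) ^ ((a:ℂ)) * ((1:ℂ) - (x:ℂ)) ^ ((b:ℂ)))
      = ((∫ x in (0:ℝ)..1, x ^ a * (1 - x) ^ b : ℝ) : ℂ) := by
    rw [← intervalIntegral.integral_ofReal]
    apply intervalIntegral.integral_congr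
    intro x _
    push_cast
    rw [Complex.cpow_natCast, Complex.cpow_natCast]
  rw [hint] at h
  have hprod : (∏ j ∈ Finset.range (b+1), ((a:ℂ)+1+(j:ℕ)))
      = ((∏ j ∈ Finset.range (b+1), (a+1+j) : ℕ) : ℂ) := by
    push_cast
    ring
  rw [hprod] at h
  have key := prod_aux a b
  set P : ℕ := ∏ j ∈ Finset.range (b+1), (a+1+j) with hP
  have hPpos : 0 < P := by
    rw [hP]
    exact Finset.prod_pos (fun j _ => by omega)
  have h2 : (∫ x in (0:ℝ)..1, x ^ a * (1 - x) ^ b : ℝ) = (b.factorial : ℝ) / (P : ℝ) := by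
    apply Complex.ofReal_inj.mp
    rw [h]
    push_cast
    ring
  rw [h2]
  have hcast : (a.factorial : ℝ) * (P : ℝ) = ((a+b+1).factorial : ℝ) := by
    exact_mod_cast key
  have hPne : (P : ℝ) ≠ 0 := by positivity
  have hfa : (a.factorial : ℝ) ≠ 0 := by positivity
  have hfn : ((a+b+1).factorial : ℝ) ≠ 0 := by positivity
  field_simp
  nlinarith [hcast]

set_option maxHeartbeats 1000000 in
theorem stmt_9 (la mu : ℝ) (hmu : 0 ≤ mu) (hml : mu < la) (n k : ℕ)
    (hn : 2 ≤ n) (hk1 : 1 ≤ k) (hk2 : k ≤ n - 1) :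
    ∫ s in Set.Ioi (0:ℝ),
      (k + 1) * n.choose (k + 1) * la ^ (n - k) * (la - mu) ^ (k + 2) *
        exp (-(la - mu) * ((k + 1) * s)) * (1 - exp (-(la - mu) * s)) ^ (n - k - 1) /
        (la - mu * exp (-(la - mu) * s)) ^ (n + 1) = 1 := by
  have hla : 0 < la := lt_of_le_of_lt hmu hml
  set r := la - mu with hrdef
  have hr : 0 < r := sub_pos.2 hml
  obtain ⟨a, hna⟩ : ∃ a, n = k + 1 + a := ⟨n - (k+1), by omega⟩
  subst hna
  have e1 : k + 1 + a - k = a + 1 := by omega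
  have e2 : k + 1 + a - k - 1 = a := by omega
  set m : ℕ := a + 1 with hm
  set φ : ℝ → ℝ := fun s => la * (1 - exp (-r*s)) / (la - mu * exp (-r*s)) with hφ
  set φ' : ℝ → ℝ := fun s => la * r^2 * exp (-r*s) / (la - mu * exp (-r*s))^2 with hφ'
  set g : ℝ → ℝ := fun t => ((m * (k+1+a).choose m : ℕ) : ℝ) * (t^a * (1-t)^k) with hg
  have hDpos : ∀ s : ℝ, 0 ≤ s → 0 < la - mu * exp (-r*s) := by
    intro s hs
    have hx1 : exp (-r*s) ≤ 1 := by
      rw [show (1:ℝ) = Real.exp 0 from (Real.exp_zero).symm, Real.exp_le_exp]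
      nlinarith
    nlinarith [exp_pos (-r*s)]
  have hderiv : ∀ s ∈ Ioi (0:ℝ), HasDerivAt φ (φ' s) s := by
    intro s hs
    have hD := hDpos s (le_of_lt hs)
    have hDne : la - mu * exp (-r*s) ≠ 0 := ne_of_gt hD
    have hx : HasDerivAt (fun s : ℝ => exp (-r*s)) (-r * exp (-r*s)) s := by
      have h1 : HasDerivAt (fun s : ℝ => -r * s) (-r) s := by
        simpa using (hasDerivAt_id s).const_mul (-r)
      simpa [mul_comm] using h1.exp
    have hN : HasDerivAt (fun s : ℝ => la * (1 - exp (-r*s))) (la * (r * exp (-r*s))) s := by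
      have := ((hasDerivAt_const s (1:ℝ)).sub hx).const_mul la
      exact this.congr_deriv (by ring)
    have hDD := (hasDerivAt_const s la).sub (hx.const_mul mu)
    have h := hN.div hDD hDne
    refine h.congr_deriv ?_
    rw [hφ']
    simp only [Pi.sub_apply]
    rw [div_eq_div_iff (pow_ne_zero _ hDne) (pow_ne_zero _ hDne), hrdef]
    ring
  have hφ'pos : ∀ s ∈ Ioi (0:ℝ), 0 < φ' s := by
    intro s hs
    have hD := hDpos s (le_of_lt hs)
    rw [hφ']
    exact div_pos (by positivity) (by positivity)
  have hmono : StrictMonoOn φ (Ioi (0:ℝ)) := by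
    apply strictMonoOn_of_deriv_pos (convex_Ioi 0)
    · intro s hs
      exact (hderiv s hs).differentiableAt.continuousAt.continuousWithinAt
    · intro s hs
      rw [interior_Ioi] at hs
      rw [(hderiv s hs).deriv]
      exact hφ'pos s hs
  have hinj : InjOn φ (Ioi (0:ℝ)) := hmono.injOn
  have himg : φ '' (Ioi (0:ℝ)) = Ioo (0:ℝ) 1 := by
    apply Subset.antisymm
    · rintro t ⟨s, hs, rfl⟩
      have hs' : (0:ℝ) < s := hs
      have hD := hDpos s (le_of_lt hs')
      have hx0 : 0 < exp (-r*s) := exp_pos _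
      have hx1 : exp (-r*s) < 1 := by
        rw [show (1:ℝ) = Real.exp 0 from (Real.exp_zero).symm, Real.exp_lt_exp]
        nlinarith
      constructor
      · apply div_pos _ hD
        nlinarith
      · rw [hφ]
        simp only
        rw [div_lt_one hD]
        nlinarith [hrdef]
    · rintro t ⟨ht0, ht1⟩
      have hdt : 0 < la - mu * t := by nlinarith
      have hdtne : la - mu * t ≠ 0 := ne_of_gt hdt
      set x0 : ℝ := la * (1 - t) / (la - mu * t) with hx0def
      have hx0pos : 0 < x0 := div_pos (by nlinarith) hdt
      have hx0lt : x0 < 1 := by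
        rw [hx0def, div_lt_one hdt]
        nlinarith [hrdef]
      have h1x0 : 1 - x0 = t * r / (la - mu * t) := by
        rw [hx0def, hrdef]
        rw [eq_div_iff hdtne, sub_mul, div_mul_cancel₀ _ hdtne]
        ring
      have hden : la - mu * x0 = la * r / (la - mu * t) := by
        rw [hx0def, hrdef]
        field_simp
        ring
      refine ⟨-Real.log x0 / r, ?_, ?_⟩
      · apply div_pos _ hr
        simpa using Real.log_neg hx0pos hx0lt
      · have hexp : exp (-r * (-Real.log x0 / r)) = x0 := by
          rw [show -r * (-Real.log x0 / r) = Real.log x0 from by field_simp]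
          exact Real.exp_log hx0pos
        rw [hφ]
        simp only [hexp]
        rw [h1x0, hden, div_eq_iff (div_ne_zero (mul_ne_zero hla.ne' hr.ne') hdtne)]
        ring
  -- main computation
  have key : ∫ s in Ioi (0:ℝ), |φ' s| • g (φ s) = 1 := by
    have hsub := MeasureTheory.integral_image_eq_integral_abs_deriv_smul measurableSet_Ioi
      (fun s hs => (hderiv s hs).hasDerivWithinAt) hinj g
    rw [himg] at hsub
    rw [← hsub, ← integral_Ioc_eq_integral_Ioo,
      ← intervalIntegral.integral_of_le (zero_le_one)]
    rw [hg]
    simp only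
    rw [intervalIntegral.integral_const_mul, beta_nat a k]
    have hnat : m * ((k+1+a).choose m) * (a.factorial * k.factorial) = (k+1+a).factorial := by
      have h := Nat.choose_mul_factorial_mul_factorial (show m ≤ k+1+a by omega)
      rw [show k+1+a - m = k from by omega] at h
      calc m * ((k+1+a).choose m) * (a.factorial * k.factorial)
          = (k+1+a).choose m * (m * a.factorial) * k.factorial := by ring
        _ = (k+1+a).choose m * m.factorial * k.factorial := by rw [hm, Nat.factorial_succ]
        _ = (k+1+a).factorial := h
    have hnat' : ((m * (k+1+a).choose m : ℕ) : ℝ) * ((a.factorial : ℝ) * k.factorial)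
        = ((a + k + 1).factorial : ℝ) := by
      rw [show a + k + 1 = k + 1 + a from by omega]
      exact_mod_cast hnat
    have hfne : ((a + k + 1).factorial : ℝ) ≠ 0 := by positivity
    rw [show ((a.factorial : ℝ) * k.factorial) / ((a + k + 1).factorial : ℝ)
        = ((a.factorial : ℝ) * k.factorial) / ((a + k + 1).factorial : ℝ) from rfl,
      ← mul_div_assoc, div_eq_one_iff_eq hfne]
    rw [← mul_assoc] at hnat' ⊢
    linarith [hnat']
  conv_rhs => rw [← key]
  apply setIntegral_congr_fun measurableSet_Ioi
  intro s hs
  have hD := hDpos s (le_of_lt hs)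
  have hDne : la - mu * exp (-r*s) ≠ 0 := ne_of_gt hD
  have habs : |φ' s| = φ' s := abs_of_pos (hφ'pos s hs)
  have h1 : 1 - φ s = r * exp (-r*s) / (la - mu * exp (-r*s)) := by
    rw [hφ]
    simp only
    rw [eq_div_iff hDne, sub_mul, one_mul, div_mul_cancel₀ _ hDne, hrdef]
    ring
  have hexp : exp (-r * (((k:ℝ) + 1) * s)) = exp (-r*s) ^ (k+1) := by
    rw [← Real.exp_nat_mul]
    congr 1
    push_cast
    ring
  have hcoefnat : (k+1) * ((k+1+a).choose (k+1)) = m * ((k+1+a).choose m) := by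
    have h1' : (k+a+1) * (k+a).choose k = (k+a+1).choose (k+1) * (k+1) := by
      simpa [Nat.succ_eq_add_one] using Nat.add_one_mul_choose_eq (k+a) k
    have h2' : (k+a+1) * (k+a).choose a = (k+a+1).choose (a+1) * (a+1) := by
      simpa [Nat.succ_eq_add_one] using Nat.add_one_mul_choose_eq (k+a) a
    have h3' : (k+a).choose a = (k+a).choose k := by
      have := Nat.choose_symm (show k ≤ k+a from by omega)
      rwa [show k + a - k = a from by omega] at this
    rw [hm, show k + 1 + a = k + a + 1 from by omega]
    calc (k+1) * ((k+a+1).choose (k+1)) = (k+a+1).choose (k+1) * (k+1) := by ring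
      _ = (k+a+1) * (k+a).choose k := h1'.symm
      _ = (k+a+1) * (k+a).choose a := by rw [h3']
      _ = (k+a+1).choose (a+1) * (a+1) := h2'
      _ = (a+1) * ((k+a+1).choose (a+1)) := by ring
  have hcoef : ((k:ℝ) + 1) * (((k+1+a).choose (k+1) : ℕ) : ℝ)
      = ((m * (k+1+a).choose m : ℕ) : ℝ) := by
    rw [← hcoefnat]
    push_cast
    ring
  have h1' : 1 - la * (1 - exp (-r*s)) / (la - mu * exp (-r*s))
      = r * exp (-r*s) / (la - mu * exp (-r*s)) := h1
  simp only [smul_eq_mul, habs, e1, e2, show m - 1 = a from by omega, hexp]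
  rw [hcoef]
  simp only [hg, hφ', hφ, hm]
  rw [h1']
  simp only [div_pow, mul_pow]
  rw [div_mul_div_comm, mul_div_assoc', div_mul_div_comm,
    div_eq_div_iff (pow_ne_zero _ hDne)
      (by first
        | positivity
        | exact mul_ne_zero (pow_ne_zero _ hDne)
            (mul_ne_zero (pow_ne_zero _ hDne) (pow_ne_zero _ hDne)))]
  ring
end

section
/- Let 0 < μ < λ, let n ≥ 2 and 1 ≤ k ≤ n−1 be integers, and let t > 0. Then the integral over s from 0 to t of s · f_{A_{n,t}^k}(s), where f_{A_{n,t}^k}(s) := k·C(n−1,k)·(λ−μ)^{k+1}·(e^{−(λ−μ)s} − e^{−(λ−μ)t})^{k−1}·e^{−(λ−μ)s}·(λ − μ e^{−(λ−μ)t})^{n−k}·(1 − e^{−(λ−μ)s})^{n−k−1} / ((λ − μ e^{−(λ−μ)s})^n · (1 − e^{−(λ−μ)t})^{n−1}), equals t − Σ_{i=0}^{k−1} Σ_{j=0}^{i} C(n−1,i) C(i,j) (−1)^{i+j} ((λ − μ e^{−(λ−μ)t})/(1 − e^{−(λ−μ)t}))^{n−j−1} · [ g(j) + Σ_{l=1}^{n−j−1}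 Σ_{m=0}^{l−1} C(n−j−1,l) C(l−1,m) (−1)^{l+m} (λ^{l−1−m} / ((λ−μ) μ^l)) h(j,m) ], where g(j) := (1/((λ−μ) λ^{n−j−1})) [ ln((λ e^{(λ−μ)t} − μ)/(λ−μ)) − Σ_{m=1}^{n−j−2} C(n−j−2,m) (μ^m/m) ((λ e^{(λ−μ)t} − μ)^{−m} − (λ−μ)^{−m}) ] and h(j,m) := ln((λ − μ e^{−(λ−μ)t})/(λ−μ)) if m+j+1−n = −1, and h(j,m) := ((λ − μ e^{−(λ−μ)t})^{m+j+2−n} − (λ−μ)^{m+j+2−n})/(m+j+2−n) otherwise. -/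
open Real MeasureTheory

noncomputable def psiA (e : ℤ) (w : ℝ) : ℝ := if e = 0 then Real.log w else w ^ e / e

lemma psiA_hasDerivAt (e : ℤ) {w : ℝ} (hw : 0 < w) : HasDerivAt (psiA e) (w ^ (e - 1)) w := by
  rcases eq_or_ne e 0 with he | he
  · subst he
    have hfe : psiA 0 = Real.log := by funext w; rfl
    rw [hfe]
    have hv : (w : ℝ) ^ ((0:ℤ) - 1) = w⁻¹ := by norm_num
    rw [hv]
    exact Real.hasDerivAt_log hw.ne'
  · have h := (hasDerivAt_zpow e w (Or.inl hw.ne')).div_const (e : ℝ)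
    have he' : (e : ℝ) ≠ 0 := Int.cast_ne_zero.mpr he
    have hfe : psiA e = fun v => v ^ e / (e:ℝ) := by funext v; simp [psiA, he]
    rw [hfe]
    convert h using 1
    · rfl
    · rfl
    field_simp

lemma neg_one_pow_sub {i j : ℕ} (hj : j ≤ i) : ((-1 : ℝ)) ^ (i - j) = (-1) ^ (i + j) := by
  have h : i + j = (i - j) + 2 * j := by omega
  rw [h, pow_add, pow_mul]
  norm_num

lemma hasDerivAt_Rsum (N k : ℕ) (hk : k ≤ N) (x : ℝ) :
    HasDerivAt (fun x : ℝ => ∑ i ∈ Finset.range k, (N.choose i : ℝ) * (1 - x) ^ i * x ^ (N - i))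
      (k * N.choose k * (1 - x) ^ (k - 1) * x ^ (N - k)) x := by
  induction k with
  | zero => simpa using hasDerivAt_const x (0 : ℝ)
  | succ k ih =>
    have hk' : k ≤ N := by omega
    have h1 := (((hasDerivAt_id x).const_sub (1 : ℝ)).pow k)
    simp only [id_eq] at h1
    have h2 := hasDerivAt_pow (N - k) x
    have h3 := ((h1.mul h2).const_mul (N.choose k : ℝ))
    have h4 := (ih hk').add h3
    have hfe : (fun x : ℝ => ∑ i ∈ Finset.range (k+1), (N.choose i : ℝ) * (1 - x) ^ i * x ^ (N - i))
        = fun x : ℝ => (∑ i ∈ Finset.range k, (N.choose i : ℝ) * (1 - x) ^ i * x ^ (N - i))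
          + (N.choose k : ℝ) * ((1 - x) ^ k * x ^ (N - k)) := by
      funext y; rw [Finset.sum_range_succ]; ring
    rw [hfe]
    convert h4 using 1
    · rfl
    · rfl
    · rfl
    have hcn : (k+1) * N.choose (k+1) = N.choose k * (N - k) := by
      rw [mul_comm]; exact Nat.choose_succ_right_eq N k
    have hc : ((k+1 : ℕ) : ℝ) * (N.choose (k+1) : ℝ) = (N.choose k : ℝ) * ((N - k : ℕ) : ℝ) := by
      exact_mod_cast congrArg (Nat.cast : ℕ → ℝ) hcn
    have e1 : N - (k+1) = N - k - 1 := by omega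
    have e2 : (k+1) - 1 = k := by omega
    rw [e1, e2]
    simp only [Pi.pow_apply]
    push_cast at hc ⊢
    linear_combination ((1-x)^k * x^(N-k-1)) * hc

lemma Rsum_eq (N k : ℕ) (hk : k ≤ N) (x : ℝ) :
    ∑ i ∈ Finset.range k, (N.choose i : ℝ) * (1 - x) ^ i * x ^ (N - i)
      = ∑ i ∈ Finset.range k, ∑ j ∈ Finset.range (i+1),
          (N.choose i : ℝ) * (i.choose j : ℝ) * (-1) ^ (i + j) * x ^ (N - j) := by
  refine Finset.sum_congr rfl fun i hi => ?_
  have hiN : i ≤ N := by have := Finset.mem_range.mp hi; omega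
  have hexp : (1 - x) ^ i = ∑ j ∈ Finset.range (i+1), (i.choose j : ℝ) * (-1)^(i+j) * x ^ (i - j) := by
    have h0 : (1 - x) ^ i = ∑ j ∈ Finset.range (i+1), (-x) ^ j * 1 ^ (i - j) * (i.choose j : ℝ) := by
      rw [← add_pow]; ring_nf
    rw [h0, ← Finset.sum_range_reflect]
    refine Finset.sum_congr rfl fun j hj => ?_
    have hj' : j ≤ i := by have := Finset.mem_range.mp hj; omega
    have e1 : i + 1 - 1 - j = i - j := by omega
    rw [e1, Nat.choose_symm hj', neg_pow, neg_one_pow_sub hj']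
    ring
  rw [hexp, Finset.mul_sum, Finset.sum_mul]
  refine Finset.sum_congr rfl fun j hj => ?_
  have hj' : j ≤ i := by have := Finset.mem_range.mp hj; omega
  rw [show N - j = (i - j) + (N - i) by omega, pow_add]
  ring

/-- The function `g(j)` from Theorem ThmExpt of the paper. -/
noncomputable def gAux (la mu t : ℝ) (n j : ℕ) : ℝ :=
  1 / ((la - mu) * la ^ (n - j - 1)) *
    (Real.log ((la * exp ((la - mu) * t) - mu) / (la - mu)) -
      ∑ m ∈ Finset.Icc 1 (n - j - 2),
        (n - j - 2).choose m * (mu ^ m / m) *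
          ((la * exp ((la - mu) * t) - mu) ^ (-(m : ℤ)) - (la - mu) ^ (-(m : ℤ))))

/-- The function `h(j,m)` from Theorem ThmExpt of the paper. -/
noncomputable def hAux (la mu t : ℝ) (n j m : ℕ) : ℝ :=
  if (m : ℤ) + j + 1 - n = -1 then
    Real.log ((la - mu * exp (-(la - mu) * t)) / (la - mu))
  else
    ((la - mu * exp (-(la - mu) * t)) ^ ((m : ℤ) + j + 2 - n) -
        (la - mu) ^ ((m : ℤ) + j + 2 - n)) / (((m : ℤ) + j + 2 - n : ℤ) : ℝ)

noncomputable def PhiA (la mu : ℝ) (N : ℕ) (s : ℝ) : ℝ :=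
  1/((la-mu)*la^N) * ∑ m ∈ Finset.range N,
      ((N-1).choose m : ℝ) * mu^m * psiA (-(m:ℤ)) (la * Real.exp ((la-mu)*s) - mu)
  + ∑ l ∈ Finset.Icc 1 N, (N.choose l : ℝ) * (-1)^l * (1/((la-mu)*mu^l)) *
      ∑ m ∈ Finset.range l,
        ((l-1).choose m : ℝ) * la^(l-1-m) * (-1)^m * psiA ((m:ℤ)+1-(N:ℤ)) (la - mu*Real.exp (-(la-mu)*s))

lemma PhiA_hasDerivAt (la mu : ℝ) (hmu : 0 < mu) (hml : mu < la) (N : ℕ) (hN : 1 ≤ N)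
    {s : ℝ} (hs : 0 ≤ s) :
    HasDerivAt (PhiA la mu N)
      (((1 - Real.exp (-(la-mu)*s)) / (la - mu*Real.exp (-(la-mu)*s))) ^ N) s := by
  obtain ⟨M, rfl⟩ : ∃ M, N = M + 1 := ⟨N - 1, by omega⟩
  set r := la - mu with hrdef
  have hr : 0 < r := by simp [hrdef]; linarith
  set X : ℝ := Real.exp (r * s) with hXdef
  set E : ℝ := Real.exp (-r * s) with hEdef
  have hX1 : 1 ≤ X := by
    rw [hXdef]; exact Real.one_le_exp (by positivity)
  have hXpos : 0 < X := lt_of_lt_of_le one_pos hX1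
  have hEpos : 0 < E := Real.exp_pos _
  have hEX : E * X = 1 := by
    rw [hEdef, hXdef, ← Real.exp_add]; ring_nf; exact Real.exp_zero
  have hE1 : E ≤ 1 := by
    nlinarith
  set W : ℝ := la * X - mu with hWdef
  set D : ℝ := la - mu * E with hDdef
  have hW : 0 < W := by
    have : la ≤ la * X := le_mul_of_one_le_right (by linarith) hX1
    simp only [hWdef]; linarith
  have hD : 0 < D := by
    have : mu * E ≤ mu := by nlinarith
    simp only [hDdef]; linarith
  have hDW : D = E * W := by
    simp only [hDdef, hWdef]; linear_combination (-la) * hEX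
  -- derivative of inner functions
  have hlin : HasDerivAt (fun x : ℝ => r * x) r s := by
    simpa using (hasDerivAt_id s).const_mul r
  have hlin2 : HasDerivAt (fun x : ℝ => -r * x) (-r) s := by
    simpa using (hasDerivAt_id s).const_mul (-r)
  have hWd : HasDerivAt (fun x : ℝ => la * Real.exp (r*x) - mu) (la * (X * r)) s :=
    ((hlin.exp).const_mul la).sub_const mu
  have hDd : HasDerivAt (fun x : ℝ => la - mu * Real.exp (-r*x)) (-(mu * (E * -r))) s :=
    ((hlin2.exp).const_mul mu).const_sub la
  -- derivative of part 1
  have hpart1 : HasDerivAt (fun x : ℝ => 1/(r*la^(M+1)) * ∑ m ∈ Finset.range (M+1),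
      ((M+1-1).choose m : ℝ) * mu^m * psiA (-(m:ℤ)) (la * Real.exp (r*x) - mu))
      (1/(r*la^(M+1)) * ∑ m ∈ Finset.range (M+1),
        ((M+1-1).choose m : ℝ) * mu^m * (W ^ (-(m:ℤ) - 1) * (la * (X * r)))) s := by
    refine HasDerivAt.const_mul _ (HasDerivAt.fun_sum fun m _ => ?_)
    exact (((psiA_hasDerivAt (-(m:ℤ)) hW).comp s hWd)).const_mul _
  -- derivative of part 2
  have hpart2 : HasDerivAt (fun x : ℝ => ∑ l ∈ Finset.Icc 1 (M+1),
      ((M+1).choose l : ℝ) * (-1)^l * (1/(r*mu^l)) * ∑ m ∈ Finset.range l,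
        ((l-1).choose m : ℝ) * la^(l-1-m) * (-1)^m * psiA ((m:ℤ)+1-(M+1:ℕ)) (la - mu*Real.exp (-r*x)))
      (∑ l ∈ Finset.Icc 1 (M+1), ((M+1).choose l : ℝ) * (-1)^l * (1/(r*mu^l)) *
        ∑ m ∈ Finset.range l,
          ((l-1).choose m : ℝ) * la^(l-1-m) * (-1)^m * (D ^ ((m:ℤ)+1-(M+1:ℕ) - 1) * (-(mu * (E * -r))))) s := by
    refine HasDerivAt.fun_sum fun l _ => HasDerivAt.const_mul _ (HasDerivAt.fun_sum fun m _ => ?_)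
    exact (((psiA_hasDerivAt _ hD).comp s hDd)).const_mul _
  have htot := hpart1.add hpart2
  have hfe : PhiA la mu (M+1) = fun x : ℝ => (1/(r*la^(M+1)) * ∑ m ∈ Finset.range (M+1),
      ((M+1-1).choose m : ℝ) * mu^m * psiA (-(m:ℤ)) (la * Real.exp (r*x) - mu))
      + ∑ l ∈ Finset.Icc 1 (M+1), ((M+1).choose l : ℝ) * (-1)^l * (1/(r*mu^l)) *
        ∑ m ∈ Finset.range l,
          ((l-1).choose m : ℝ) * la^(l-1-m) * (-1)^m * psiA ((m:ℤ)+1-(M+1:ℕ)) (la - mu*Real.exp (-r*x)) := by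
    funext x; simp only [PhiA, hrdef]
  rw [hfe]
  convert htot using 1
  · rfl
  · rfl
  · rfl
  -- now the algebraic identity
  have hs1 : ∑ m ∈ Finset.range (M+1), ((M+1-1).choose m : ℝ) * mu^m * (W ^ (-(m:ℤ) - 1) * (la * (X * r)))
      = (mu + W)^M * (la * (X * r)) / W^(M+1) := by
    rw [add_pow, Finset.sum_mul, Finset.sum_div]
    refine Finset.sum_congr rfl fun m hm => ?_
    have hmM : m ≤ M := by have := Finset.mem_range.mp hm; omega
    have hWz : W ^ (-(m:ℤ) - 1) = W ^ (M - m) / W ^ (M+1) := by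
      rw [eq_div_iff (pow_ne_zero _ hW.ne'), ← zpow_natCast W (M - m), ← zpow_natCast W (M+1),
        ← zpow_add₀ hW.ne']
      congr 1
      have : ((M - m : ℕ) : ℤ) = (M : ℤ) - m := by omega
      omega
    rw [hWz]
    simp only [Nat.add_sub_cancel]
    ring
  have hs2 : ∀ l ∈ Finset.Icc 1 (M+1),
      ∑ m ∈ Finset.range l, ((l-1).choose m : ℝ) * la^(l-1-m) * (-1)^m *
          (D ^ ((m:ℤ)+1-(M+1:ℕ) - 1) * (-(mu * (E * -r))))
        = (-D + la)^(l-1) * (mu * E * r) / D^(M+1) := by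
    intro l hl
    have hl1 : 1 ≤ l ∧ l ≤ M + 1 := by simpa using hl
    rw [add_pow, Finset.sum_mul, Finset.sum_div]
    have hrange : Finset.range ((l-1)+1) = Finset.range l := by congr 1; omega
    rw [hrange]
    refine Finset.sum_congr rfl fun m hm => ?_
    have hml' : m ≤ l - 1 := by have := Finset.mem_range.mp hm; omega
    have hDz : D ^ ((m:ℤ)+1-(M+1:ℕ) - 1) = D ^ m / D ^ (M+1) := by
      rw [eq_div_iff (pow_ne_zero _ hD.ne'), ← zpow_natCast D m, ← zpow_natCast D (M+1),
        ← zpow_add₀ hD.ne']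
      congr 1
      omega
    rw [hDz, neg_pow D m]
    ring
  have hs2' : ∑ l ∈ Finset.Icc 1 (M+1), ((M+1).choose l : ℝ) * (-1)^l * (1/(r*mu^l)) *
        ∑ m ∈ Finset.range l,
          ((l-1).choose m : ℝ) * la^(l-1-m) * (-1)^m * (D ^ ((m:ℤ)+1-(M+1:ℕ) - 1) * (-(mu * (E * -r))))
      = ∑ l ∈ Finset.Icc 1 (M+1), ((M+1).choose l : ℝ) * (-1)^l * (1/(r*mu^l)) *
          ((-D + la)^(l-1) * (mu * E * r) / D^(M+1)) :=
    Finset.sum_congr rfl fun l hl => by rw [hs2 l hl]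
  rw [hs1, hs2']
  have hmuW : mu + W = la * X := by simp only [hWdef]; ring
  have hlaD : -D + la = mu * E := by simp only [hDdef]; ring
  rw [hmuW, hlaD]
  have hWne : W ≠ 0 := hW.ne'
  have hDne : D ≠ 0 := hD.ne'
  have hlane : la ≠ 0 := by linarith
  have hrne : r ≠ 0 := hr.ne'
  have hEM : E ^ (M+1) * X ^ (M+1) = 1 := by rw [← mul_pow, hEX, one_pow]
  have hp1 : 1/(r*la^(M+1)) * ((la * X)^M * (la * (X * r)) / W^(M+1)) = 1 / D^(M+1) := by
    have hXM : (la*X)^M * (la*(X*r)) = (r * la^(M+1)) * X^(M+1) := by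
      rw [mul_pow, pow_succ, pow_succ]; ring
    have hEW : (E*W)^(M+1) = E^(M+1) * W^(M+1) := mul_pow E W (M+1)
    rw [hXM, hDW, hEW]
    rw [← mul_div_assoc, ← mul_assoc, one_div_mul_cancel (mul_ne_zero hrne (pow_ne_zero _ hlane)), one_mul,
      div_eq_div_iff (pow_ne_zero _ hWne) (mul_ne_zero (pow_ne_zero _ hEpos.ne') (pow_ne_zero _ hWne))]
    linear_combination (W^(M+1)) * hEM
  rw [hp1]
  have hterm : ∀ l ∈ Finset.Icc 1 (M+1),
      ((M+1).choose l : ℝ) * (-1)^l * (1/(r*mu^l)) * ((mu * E)^(l-1) * (mu * E * r) / D^(M+1))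
        = ((M+1).choose l : ℝ) * (-E)^l / D^(M+1) := by
    intro l hl
    have hl1 : 1 ≤ l := by simp at hl; omega
    have hpow : (mu * E)^(l-1) * (mu * E) = (mu * E)^l := by
      rw [← pow_succ]; congr 1; omega
    have hmune : mu^l ≠ 0 := pow_ne_zero _ hmu.ne'
    have h2 : (mu*E)^(l-1) * (mu*E) = mu^l * E^l := by rw [hpow, mul_pow]
    have h2' : (mu*E)^(l-1) * (mu*E*r) = r * mu^l * E^l := by linear_combination r * h2
    rw [neg_pow E l, h2']
    field_simp
  rw [Finset.sum_congr rfl hterm]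
  have hbin : (1-E)^(M+1) = ∑ l ∈ Finset.range (M+2), ((M+1).choose l : ℝ) * (-E)^l := by
    have h := add_pow (-E) (1:ℝ) (M+1)
    simp only [one_pow, mul_one] at h
    rw [show (1:ℝ) - E = -E + 1 by ring, h]
    exact Finset.sum_congr rfl fun l _ => by ring
  have hsplit : Finset.range (M+2) = insert 0 (Finset.Icc 1 (M+1)) := by
    ext a; simp; omega
  rw [div_pow, hbin, hsplit, Finset.sum_insert (by simp), add_div, Finset.sum_div]
  norm_num

lemma psiA_zero (w : ℝ) : psiA 0 w = Real.log w := rfl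

lemma psiA_of_ne {e : ℤ} (he : e ≠ 0) (w : ℝ) : psiA e w = w ^ e / e := if_neg he

lemma PhiA_diff (la mu t : ℝ) (hmu : 0 < mu) (hml : mu < la) (ht : 0 < t)
    (n j : ℕ) (hj : j + 2 ≤ n) :
    PhiA la mu (n - j - 1) t - PhiA la mu (n - j - 1) 0 =
      gAux la mu t n j +
        ∑ l ∈ Finset.Icc 1 (n - j - 1), ∑ m ∈ Finset.range l,
          ((n - j - 1).choose l : ℝ) * ((l - 1).choose m : ℝ) * (-1 : ℝ) ^ (l + m) *
            (la ^ (l - 1 - m) / ((la - mu) * mu ^ l)) * hAux la mu t n j m := by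
  have hr : (0:ℝ) < la - mu := by linarith
  have hN1 : 1 ≤ n - j - 1 := by omega
  have hNZ : ((n - j - 1 : ℕ) : ℤ) = (n : ℤ) - j - 1 := by omega
  have hexpt : 1 ≤ Real.exp ((la - mu) * t) := Real.one_le_exp (by positivity)
  have hVt : 0 < la * Real.exp ((la - mu) * t) - mu := by nlinarith
  have hexpt' : Real.exp (-(la - mu) * t) ≤ 1 := by
    rw [Real.exp_le_one_iff]; nlinarith
  have hDt : 0 < la - mu * Real.exp (-(la - mu) * t) := by nlinarith [Real.exp_pos (-(la-mu)*t)]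
  unfold PhiA
  have h0a : la * Real.exp ((la - mu) * 0) - mu = la - mu := by simp
  have h0b : la - mu * Real.exp (-(la - mu) * 0) = la - mu := by simp
  rw [h0a, h0b, add_sub_add_comm]
  congr 1
  · -- part 1 = gAux
    rw [← mul_sub, ← Finset.sum_sub_distrib]
    unfold gAux
    congr 1
    have hsplit : Finset.range (n - j - 1) = insert 0 (Finset.Icc 1 (n - j - 1 - 1)) := by
      ext a; simp; omega
    rw [hsplit, Finset.sum_insert (by simp)]
    have hind : n - j - 1 - 1 = n - j - 2 := by omega
    rw [hind]
    have h0term : ((n - j - 2).choose 0 : ℝ) * mu ^ 0 * psiA (-(0:ℕ):ℤ) (la * Real.exp ((la-mu)*t) - mu)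
        - ((n - j - 2).choose 0 : ℝ) * mu ^ 0 * psiA (-(0:ℕ):ℤ) (la - mu) =
        Real.log ((la * Real.exp ((la-mu)*t) - mu) / (la - mu)) := by
      norm_num [psiA_zero]
      rw [Real.log_div hVt.ne' hr.ne']
    rw [h0term]
    have habs : ∀ (L S1 S2 : ℝ), S1 = -S2 → L + S1 = L - S2 := by
      intro L S1 S2 h; rw [h]; ring
    apply habs
    rw [← Finset.sum_neg_distrib]
    refine Finset.sum_congr rfl fun m hm => ?_
    have hm1 : 1 ≤ m := by simp at hm; omega
    have hmne : (-(m:ℤ)) ≠ 0 := by omega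
    rw [psiA_of_ne hmne, psiA_of_ne hmne]
    push_cast
    rw [div_neg, div_neg]
    ring
  · -- part 2 = h sums
    rw [← Finset.sum_sub_distrib]
    refine Finset.sum_congr rfl fun l hl => ?_
    have hl1 : 1 ≤ l ∧ l ≤ n - j - 1 := by simpa using hl
    rw [← mul_sub, ← Finset.sum_sub_distrib, Finset.mul_sum]
    refine Finset.sum_congr rfl fun m hm => ?_
    have hml' : m < l := Finset.mem_range.mp hm
    unfold hAux
    rcases eq_or_ne ((m:ℤ) + j + 1 - n) (-1) with hc | hc
    · rw [if_pos hc]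
      have he0 : (m:ℤ) + 1 - ((n - j - 1 : ℕ) : ℤ) = 0 := by omega
      rw [he0, psiA_zero, psiA_zero]
      rw [Real.log_div hDt.ne' hr.ne', pow_add]
      ring
    · rw [if_neg hc]
      have he0 : (m:ℤ) + 1 - ((n - j - 1 : ℕ) : ℤ) = (m:ℤ) + j + 2 - n := by omega
      have hene : (m:ℤ) + 1 - ((n - j - 1 : ℕ) : ℤ) ≠ 0 := by omega
      rw [psiA_of_ne hene, psiA_of_ne hene, he0, pow_add]
      ring

set_option maxHeartbeats 3000000 in
theorem stmt_10 (la mu : ℝ) (hmu : 0 < mu) (hml : mu < la) (n k : ℕ)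
    (hn : 2 ≤ n) (hk1 : 1 ≤ k) (hk2 : k ≤ n - 1) (t : ℝ) (ht : 0 < t) :
    ∫ s in (0:ℝ)..t,
      s * (k * (n - 1).choose k * (la - mu) ^ (k + 1) *
        (exp (-(la - mu) * s) - exp (-(la - mu) * t)) ^ (k - 1) *
        exp (-(la - mu) * s) * (la - mu * exp (-(la - mu) * t)) ^ (n - k) *
        (1 - exp (-(la - mu) * s)) ^ (n - k - 1) /
        ((la - mu * exp (-(la - mu) * s)) ^ n * (1 - exp (-(la - mu) * t)) ^ (n - 1)))
      = t - ∑ i ∈ Finset.range k, ∑ j ∈ Finset.range (i + 1),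
          (n - 1).choose i * i.choose j * (-1 : ℝ) ^ (i + j) *
            ((la - mu * exp (-(la - mu) * t)) / (1 - exp (-(la - mu) * t))) ^ (n - j - 1) *
            (gAux la mu t n j +
              ∑ l ∈ Finset.Icc 1 (n - j - 1), ∑ m ∈ Finset.range l,
                (n - j - 1).choose l * (l - 1).choose m * (-1 : ℝ) ^ (l + m) *
                  (la ^ (l - 1 - m) / ((la - mu) * mu ^ l)) * hAux la mu t n j m) := by
  have hr : (0:ℝ) < la - mu := by linarith
  have hEt : 0 < Real.exp (-(la - mu) * t) := Real.exp_pos _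
  have hEt1 : Real.exp (-(la - mu) * t) < 1 := by
    rw [Real.exp_lt_one_iff]; nlinarith
  have hc1t : 0 < 1 - Real.exp (-(la - mu) * t) := by linarith
  have hDt : 0 < la - mu * Real.exp (-(la - mu) * t) := by nlinarith
  set Qt : ℝ := (la - mu * Real.exp (-(la - mu) * t)) / (1 - Real.exp (-(la - mu) * t)) with hQt
  set F1 : ℝ → ℝ := fun u =>
    (1 - Real.exp (-(la - mu) * u)) / (la - mu * Real.exp (-(la - mu) * u)) * Qt with hF1def
  set Rf : ℝ → ℝ := fun y =>
    ∑ i ∈ Finset.range k, ((n-1).choose i : ℝ) * (1 - y) ^ i * y ^ (n - 1 - i) with hRfdef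
  set H : ℝ → ℝ := fun u => u * Rf (F1 u)
      - ∑ i ∈ Finset.range k, ∑ j ∈ Finset.range (i + 1),
          ((n-1).choose i : ℝ) * (i.choose j : ℝ) * (-1 : ℝ) ^ (i + j) * Qt ^ (n - 1 - j) *
            PhiA la mu (n - 1 - j) u with hHdef
  have hjn : ∀ j, j ≤ k - 1 → 1 ≤ n - 1 - j := by intro j hj; omega
  -- derivative of H on [0,t]
  have hderiv : ∀ x ∈ Set.uIcc (0:ℝ) t, HasDerivAt H
      (x * (k * (n - 1).choose k * (la - mu) ^ (k + 1) *
        (exp (-(la - mu) * x) - exp (-(la - mu) * t)) ^ (k - 1) *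
        exp (-(la - mu) * x) * (la - mu * exp (-(la - mu) * t)) ^ (n - k) *
        (1 - exp (-(la - mu) * x)) ^ (n - k - 1) /
        ((la - mu * exp (-(la - mu) * x)) ^ n * (1 - exp (-(la - mu) * t)) ^ (n - 1)))) x := by
    intro x hx
    rw [Set.uIcc_of_le ht.le] at hx
    obtain ⟨hx0, hxt⟩ := hx
    have hEx : 0 < Real.exp (-(la - mu) * x) := Real.exp_pos _
    have hEx1 : Real.exp (-(la - mu) * x) ≤ 1 := by
      rw [Real.exp_le_one_iff]; nlinarith
    have hDx : 0 < la - mu * Real.exp (-(la - mu) * x) := by nlinarith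
    -- derivative pieces
    have hEd : HasDerivAt (fun u : ℝ => Real.exp (-(la - mu) * u))
        (Real.exp (-(la - mu) * x) * -(la - mu)) x := by
      have h := (((hasDerivAt_id x).const_mul (-(la - mu)))).exp
      simpa using h
    have hnum : HasDerivAt (fun u : ℝ => 1 - Real.exp (-(la - mu) * u))
        (-(Real.exp (-(la - mu) * x) * -(la - mu))) x := hEd.const_sub 1
    have hden : HasDerivAt (fun u : ℝ => la - mu * Real.exp (-(la - mu) * u))
        (-(mu * (Real.exp (-(la - mu) * x) * -(la - mu)))) x := (hEd.const_mul mu).const_sub la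
    have hq := hnum.div hden hDx.ne'
    have hF1d := hq.mul_const Qt
    have hRd := (hasDerivAt_Rsum (n-1) k hk2 (F1 x)).comp x hF1d
    have hA := (hasDerivAt_id x).mul hRd
    have hB : HasDerivAt (fun u : ℝ => ∑ i ∈ Finset.range k, ∑ j ∈ Finset.range (i + 1),
        ((n-1).choose i : ℝ) * (i.choose j : ℝ) * (-1 : ℝ) ^ (i + j) * Qt ^ (n - 1 - j) *
          PhiA la mu (n - 1 - j) u)
        (∑ i ∈ Finset.range k, ∑ j ∈ Finset.range (i + 1),
          ((n-1).choose i : ℝ) * (i.choose j : ℝ) * (-1 : ℝ) ^ (i + j) * Qt ^ (n - 1 - j) *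
            (((1 - Real.exp (-(la-mu)*x)) / (la - mu*Real.exp (-(la-mu)*x))) ^ (n - 1 - j))) x := by
      refine HasDerivAt.fun_sum fun i hi => ?_
      refine HasDerivAt.fun_sum fun j hj => ?_
      have hij : j ≤ i ∧ i ≤ k - 1 := by
        constructor
        · have := Finset.mem_range.mp hj; omega
        · have := Finset.mem_range.mp hi; omega
      have hN1 : 1 ≤ n - 1 - j := hjn j (le_trans hij.1 hij.2)
      have hP := PhiA_hasDerivAt la mu hmu hml (n - 1 - j) hN1 hx0
      exact hP.const_mul _
    have htot := hA.sub hB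
    have hHfun : H = fun u => (fun u => id u * (Rf ∘ F1) u) u
        - (fun u => ∑ i ∈ Finset.range k, ∑ j ∈ Finset.range (i + 1),
          ((n-1).choose i : ℝ) * (i.choose j : ℝ) * (-1 : ℝ) ^ (i + j) * Qt ^ (n - 1 - j) *
            PhiA la mu (n - 1 - j) u) u := by
      funext u; simp [hHdef, Function.comp]
    rw [hHfun]
    convert htot.sub (hasDerivAt_const x 0) using 1
    · rfl
    · rfl
    · funext u; simp [hRfdef]
    simp only [Function.comp, id_eq, one_mul, sub_zero]
    have hF1app : F1 x = (1 - Real.exp (-(la - mu) * x)) / (la - mu * Real.exp (-(la - mu) * x)) * Qt := by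
      simp only [hF1def]
    have hsum_eq : (∑ i ∈ Finset.range k, ∑ j ∈ Finset.range (i + 1),
        ((n-1).choose i : ℝ) * (i.choose j : ℝ) * (-1 : ℝ) ^ (i + j) * Qt ^ (n - 1 - j) *
          ((1 - Real.exp (-(la-mu)*x)) / (la - mu*Real.exp (-(la-mu)*x))) ^ (n - 1 - j))
        = Rf (F1 x) := by
      simp only [hRfdef]
      rw [Rsum_eq (n-1) k hk2 (F1 x)]
      refine Finset.sum_congr rfl fun i hi => Finset.sum_congr rfl fun j hj => ?_
      rw [hF1app, mul_pow]
      ring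
    rw [hsum_eq, add_sub_cancel_left]
    rw [hF1app, hQt]
    obtain ⟨m2, rfl⟩ : ∃ m2, n = k + m2 + 1 := ⟨n - 1 - k, by omega⟩
    obtain ⟨k', rfl⟩ : ∃ k', k = k' + 1 := ⟨k - 1, by omega⟩
    simp only [show k' + 1 + m2 + 1 - 1 - (k' + 1) = m2 from by omega,
      show k' + 1 - 1 = k' from by omega,
      show k' + 1 + m2 + 1 - (k' + 1) = m2 + 1 from by omega,
      show k' + 1 + m2 + 1 - (k' + 1) - 1 = m2 from by omega,
      show k' + 1 + m2 + 1 - 1 = k' + m2 + 1 from by omega,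
      show k' + 1 + 1 = k' + 2 from by omega]
    have h3 : (-(Real.exp (-(la - mu) * x) * -(la - mu)) * (la - mu * Real.exp (-(la - mu) * x)) -
        (1 - Real.exp (-(la - mu) * x)) * -(mu * (Real.exp (-(la - mu) * x) * -(la - mu))))
        = (la - mu)^2 * Real.exp (-(la - mu) * x) := by ring
    rw [h3]
    have h1 : 1 - (1 - Real.exp (-(la - mu) * x)) / (la - mu * Real.exp (-(la - mu) * x)) *
        ((la - mu * Real.exp (-(la - mu) * t)) / (1 - Real.exp (-(la - mu) * t)))
        = ((la - mu) * (Real.exp (-(la - mu) * x) - Real.exp (-(la - mu) * t))) /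
          ((la - mu * Real.exp (-(la - mu) * x)) * (1 - Real.exp (-(la - mu) * t))) := by
      generalize Real.exp (-(la - mu) * x) = A at hDx ⊢
      generalize Real.exp (-(la - mu) * t) = B at hc1t ⊢
      have hDxne : (la - mu * A) ≠ 0 := hDx.ne'
      have hctne : (1 - B) ≠ 0 := hc1t.ne'
      rw [div_mul_div_comm, one_sub_div (mul_ne_zero hDxne hctne)]
      congr 1
      ring
    rw [h1]
    have h2 : (1 - Real.exp (-(la - mu) * x)) / (la - mu * Real.exp (-(la - mu) * x)) *
        ((la - mu * Real.exp (-(la - mu) * t)) / (1 - Real.exp (-(la - mu) * t)))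
        = ((1 - Real.exp (-(la - mu) * x)) * (la - mu * Real.exp (-(la - mu) * t))) /
          ((la - mu * Real.exp (-(la - mu) * x)) * (1 - Real.exp (-(la - mu) * t))) :=
      div_mul_div_comm _ _ _ _
    rw [h2]
    rw [div_pow, div_pow]
    generalize Real.exp (-(la - mu) * x) = A at hDx ⊢
    generalize Real.exp (-(la - mu) * t) = B at hc1t ⊢
    have hDxne : (la - mu * A) ≠ 0 := hDx.ne'
    have hctne : (1 - B) ≠ 0 := hc1t.ne'
    simp only [mul_pow]
    field_simp
    simp only [show k' + m2 + 1 - (k' + 1) = m2 from by omega, show m2 + 1 - 1 = m2 from by omega]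
    ring
  have hint : IntervalIntegrable (fun s : ℝ =>
      s * (k * (n - 1).choose k * (la - mu) ^ (k + 1) *
        (exp (-(la - mu) * s) - exp (-(la - mu) * t)) ^ (k - 1) *
        exp (-(la - mu) * s) * (la - mu * exp (-(la - mu) * t)) ^ (n - k) *
        (1 - exp (-(la - mu) * s)) ^ (n - k - 1) /
        ((la - mu * exp (-(la - mu) * s)) ^ n * (1 - exp (-(la - mu) * t)) ^ (n - 1))))
      MeasureTheory.volume 0 t := by
    apply ContinuousOn.intervalIntegrable
    apply ContinuousOn.mul continuousOn_id
    apply ContinuousOn.div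
    · fun_prop
    · fun_prop
    · intro s hs
      rw [Set.uIcc_of_le ht.le] at hs
      have hs0 : 0 ≤ s := hs.1
      have hE1 : Real.exp (-(la - mu) * s) ≤ 1 := by
        rw [Real.exp_le_one_iff]; nlinarith
      have hDxs : 0 < la - mu * Real.exp (-(la - mu) * s) := by
        nlinarith [Real.exp_pos (-(la - mu) * s)]
      exact (mul_pos (pow_pos hDxs n) (pow_pos hc1t (n - 1))).ne'
  rw [intervalIntegral.integral_eq_sub_of_hasDerivAt hderiv hint]
  have hF1t : F1 t = 1 := by
    simp only [hF1def]
    rw [div_mul_div_comm, div_eq_one_iff_eq (by positivity)]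
    ring
  have hRf1 : Rf 1 = 1 := by
    simp only [hRfdef]
    rw [Finset.sum_eq_single_of_mem 0 (Finset.mem_range.mpr (by omega))
      (fun i _ hi => by simp [zero_pow hi])]
    simp
  have hdiff : (∑ i ∈ Finset.range k, ∑ j ∈ Finset.range (i + 1),
        ((n-1).choose i : ℝ) * (i.choose j : ℝ) * (-1 : ℝ) ^ (i + j) * Qt ^ (n - 1 - j) *
          PhiA la mu (n - 1 - j) t)
      - (∑ i ∈ Finset.range k, ∑ j ∈ Finset.range (i + 1),
        ((n-1).choose i : ℝ) * (i.choose j : ℝ) * (-1 : ℝ) ^ (i + j) * Qt ^ (n - 1 - j) *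
          PhiA la mu (n - 1 - j) 0)
      = ∑ i ∈ Finset.range k, ∑ j ∈ Finset.range (i + 1),
        ((n-1).choose i : ℝ) * (i.choose j : ℝ) * (-1 : ℝ) ^ (i + j) * Qt ^ (n - 1 - j) *
          (PhiA la mu (n - 1 - j) t - PhiA la mu (n - 1 - j) 0) := by
    rw [← Finset.sum_sub_distrib]
    refine Finset.sum_congr rfl fun i hi => ?_
    rw [← Finset.sum_sub_distrib]
    exact Finset.sum_congr rfl fun j hj => by ring
  have hfin : (∑ i ∈ Finset.range k, ∑ j ∈ Finset.range (i + 1),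
        ((n-1).choose i : ℝ) * (i.choose j : ℝ) * (-1 : ℝ) ^ (i + j) * Qt ^ (n - 1 - j) *
          (PhiA la mu (n - 1 - j) t - PhiA la mu (n - 1 - j) 0))
      = ∑ i ∈ Finset.range k, ∑ j ∈ Finset.range (i + 1),
          ((n - 1).choose i : ℝ) * (i.choose j : ℝ) * (-1 : ℝ) ^ (i + j) * Qt ^ (n - j - 1) *
            (gAux la mu t n j +
              ∑ l ∈ Finset.Icc 1 (n - j - 1), ∑ m ∈ Finset.range l,
                ((n - j - 1).choose l : ℝ) * ((l - 1).choose m : ℝ) * (-1 : ℝ) ^ (l + m) *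
                  (la ^ (l - 1 - m) / ((la - mu) * mu ^ l)) * hAux la mu t n j m) := by
    refine Finset.sum_congr rfl fun i hi => Finset.sum_congr rfl fun j hj => ?_
    have hj2 : j + 2 ≤ n := by
      have h1 := Finset.mem_range.mp hi
      have h2 := Finset.mem_range.mp hj
      omega
    rw [show n - 1 - j = n - j - 1 from by omega]
    rw [PhiA_diff la mu t hmu hml ht n j hj2]
  simp only [hHdef, hF1t, hRf1, mul_one, zero_mul, zero_sub, sub_neg_eq_add]
  linear_combination (-1 : ℝ) * (hdiff.trans hfin)
end

section
/- Let λ > 0, let n ≥ 2 and 1 ≤ k ≤ n−1 be integers, and let t > 0. Then the integral over s from 0 to t of s · k·C(n−1,k)·λ·(e^{−λs} − e^{−λt})^{k−1}·e^{−λs}·(1 − e^{−λs})^{n−k−1} / (1 − e^{−λt})^{n−1} equals Σ_{i=0}^{n−k−1} Σ_{j=0}^{k−1} [ k C(n−1,k) C(n−k−1,i) C(k−1,j) (−1)^{i+j} / (λ (k+i−j)^2) ] · (1 − e^{−λt})^{1−n} · ( e^{−jλt} − ((k+i−j)λt + 1) e^{−(k+i)λt} ). -/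
open Real MeasureTheory

lemma aux_int (c t : ℝ) (hc : c ≠ 0) :
    ∫ s in (0:ℝ)..t, s * Real.exp (-(c * s)) =
      (1 - (c * t + 1) * Real.exp (-(c * t))) / c ^ 2 := by
  have hd : ∀ x ∈ Set.uIcc (0:ℝ) t,
      HasDerivAt (fun s : ℝ => -((s / c + 1 / c ^ 2) * Real.exp (-(c * s))))
        (x * Real.exp (-(c * x))) x := by
    intro x _
    have h1 : HasDerivAt (fun s : ℝ => s / c + 1 / c ^ 2) (1 / c) x :=
      ((hasDerivAt_id x).div_const c).add_const (1 / c ^ 2)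
    have h3 : HasDerivAt (fun s : ℝ => -(c * s)) (-c) x := by
      have := ((hasDerivAt_id x).const_mul c).neg
      simp only [id, mul_one] at this
      exact this
    have h2 : HasDerivAt (fun s : ℝ => Real.exp (-(c * s))) (Real.exp (-(c * x)) * (-c)) x :=
      (Real.hasDerivAt_exp _).comp x h3
    have h4 : HasDerivAt (fun s : ℝ => -((s / c + 1 / c ^ 2) * Real.exp (-(c * s)))) _ x :=
      (h1.mul h2).neg
    convert h4 using 1
    field_simp
    ring
  have hi : IntervalIntegrable (fun s : ℝ => s * Real.exp (-(c * s))) volume 0 t :=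
    (continuous_id.mul (Real.continuous_exp.comp
      ((continuous_const.mul continuous_id).neg))).intervalIntegrable 0 t
  rw [intervalIntegral.integral_eq_sub_of_hasDerivAt hd hi]
  have he : Real.exp (-(c * 0)) = 1 := by norm_num
  rw [he]
  field_simp
  ring

set_option maxHeartbeats 4000000 in
theorem stmt_11 (la : ℝ) (hla : 0 < la) (n k : ℕ) (hn : 2 ≤ n) (hk1 : 1 ≤ k)
    (hk2 : k ≤ n - 1) (t : ℝ) (ht : 0 < t) :
    ∫ s in (0:ℝ)..t,
      s * (k * (n - 1).choose k * la * (exp (-la * s) - exp (-la * t)) ^ (k - 1) *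
        exp (-la * s) * (1 - exp (-la * s)) ^ (n - k - 1) / (1 - exp (-la * t)) ^ (n - 1))
      = ∑ i ∈ Finset.range (n - k), ∑ j ∈ Finset.range k,
          (k * (n - 1).choose k * (n - k - 1).choose i * (k - 1).choose j *
              (-1 : ℝ) ^ (i + j) / (la * ((k : ℝ) + i - j) ^ 2)) *
            (1 - exp (-la * t)) ^ (1 - (n : ℤ)) *
            (exp (-(j : ℝ) * la * t) -
              (((k : ℝ) + i - j) * la * t + 1) * exp (-((k : ℝ) + i) * la * t)) := by
  have hkn : k + 1 ≤ n := by omega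
  have hnk : n - k - 1 + 1 = n - k := by omega
  have hkk : k - 1 + 1 = k := by omega
  have hplt : exp (-la * t) < 1 := by
    rw [Real.exp_lt_one_iff]; nlinarith
  have hq : (0:ℝ) < 1 - exp (-la * t) := by linarith
  have hQ : ((1 - exp (-la * t)) ^ (n - 1) : ℝ) ≠ 0 := pow_ne_zero _ (ne_of_gt hq)
  have hcpos : ∀ (i j : ℕ), j < k → (0:ℝ) < (k : ℝ) + i - j := by
    intro i j hj
    have h1 : (j:ℝ) < k := by exact_mod_cast hj
    have h2 : (0:ℝ) ≤ i := Nat.cast_nonneg i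
    linarith
  -- pointwise expansion
  have key : ∀ s : ℝ,
      s * (k * (n - 1).choose k * la * (exp (-la * s) - exp (-la * t)) ^ (k - 1) *
        exp (-la * s) * (1 - exp (-la * s)) ^ (n - k - 1) / (1 - exp (-la * t)) ^ (n - 1))
      = ∑ i ∈ Finset.range (n - k), ∑ j ∈ Finset.range k,
          ((k : ℝ) * (n - 1).choose k * (n - k - 1).choose i * (k - 1).choose j *
            (-1:ℝ) ^ (i + j) * exp (-la * t) ^ j * la / (1 - exp (-la * t)) ^ (n - 1)) *
            (s * exp (-((((k : ℝ) + i - j) * la) * s))) := by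
    intro s
    have e1 : (exp (-la * s) - exp (-la * t)) ^ (k - 1)
        = ∑ j ∈ Finset.range k,
            (-exp (-la * t)) ^ j * exp (-la * s) ^ (k - 1 - j) * ((k - 1).choose j : ℝ) := by
      rw [show exp (-la * s) - exp (-la * t) = -exp (-la * t) + exp (-la * s) by ring,
        add_pow, hkk]
    have e2 : (1 - exp (-la * s)) ^ (n - k - 1)
        = ∑ i ∈ Finset.range (n - k), (-exp (-la * s)) ^ i * ((n - k - 1).choose i : ℝ) := by
      rw [show (1:ℝ) - exp (-la * s) = -exp (-la * s) + 1 by ring, add_pow, hnk]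
      simp
    rw [e1, e2]
    simp only [Finset.sum_mul, Finset.mul_sum, Finset.sum_div]
    refine Finset.sum_congr rfl fun i _ => Finset.sum_congr rfl fun j hj => ?_
    have hjk : j < k := Finset.mem_range.mp hj
    have hx : exp (-la * s) ^ (k - 1 - j) * exp (-la * s) * exp (-la * s) ^ i
        = exp (-((((k : ℝ) + i - j) * la) * s)) := by
      rw [← Real.exp_nat_mul, ← Real.exp_nat_mul, ← Real.exp_add, ← Real.exp_add]
      congr 1
      have hj' : j ≤ k - 1 := by omega
      have : ((k - 1 - j : ℕ) : ℝ) = (k : ℝ) - 1 - j := by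
        push_cast [Nat.cast_sub hj', Nat.cast_sub hk1]
        ring
      rw [this]
      ring
    rw [← hx]
    field_simp
    ring
  have hcont : ∀ (c : ℝ), Continuous (fun s : ℝ => s * exp (-(c * s))) :=
    fun c => continuous_id.mul (Real.continuous_exp.comp
      ((continuous_const.mul continuous_id).neg))
  rw [intervalIntegral.integral_congr (g := fun s =>
      ∑ i ∈ Finset.range (n - k), ∑ j ∈ Finset.range k,
          ((k : ℝ) * (n - 1).choose k * (n - k - 1).choose i * (k - 1).choose j *
            (-1:ℝ) ^ (i + j) * exp (-la * t) ^ j * la / (1 - exp (-la * t)) ^ (n - 1)) *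
            (s * exp (-((((k : ℝ) + i - j) * la) * s)))) (fun s _ => key s)]
  have hint1 : ∀ (i j : ℕ), IntervalIntegrable (fun s : ℝ =>
      ((k : ℝ) * (n - 1).choose k * (n - k - 1).choose i * (k - 1).choose j *
        (-1:ℝ) ^ (i + j) * exp (-la * t) ^ j * la / (1 - exp (-la * t)) ^ (n - 1)) *
        (s * exp (-((((k : ℝ) + i - j) * la) * s)))) volume 0 t :=
    fun i j => (continuous_const.mul (hcont (((k : ℝ) + i - j) * la))).intervalIntegrable 0 t
  have hint2 : ∀ i : ℕ, IntervalIntegrable (fun s : ℝ =>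
      ∑ j ∈ Finset.range k,
        ((k : ℝ) * (n - 1).choose k * (n - k - 1).choose i * (k - 1).choose j *
          (-1:ℝ) ^ (i + j) * exp (-la * t) ^ j * la / (1 - exp (-la * t)) ^ (n - 1)) *
          (s * exp (-((((k : ℝ) + i - j) * la) * s)))) volume 0 t :=
    fun i => (continuous_finset_sum (Finset.range k) (fun j _ =>
      continuous_const.mul (hcont (((k : ℝ) + i - j) * la)))).intervalIntegrable 0 t
  rw [intervalIntegral.integral_finset_sum (fun i _ => hint2 i)]
  refine Finset.sum_congr rfl fun i hi => ?_
  rw [intervalIntegral.integral_finset_sum (fun j _ => hint1 i j)]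
  refine Finset.sum_congr rfl fun j hj => ?_
  have hjk : j < k := Finset.mem_range.mp hj
  have hcne : ((k : ℝ) + i - j) * la ≠ 0 :=
    ne_of_gt (mul_pos (hcpos i j hjk) hla)
  rw [intervalIntegral.integral_const_mul, aux_int _ t hcne]
  have hz : (1 - exp (-la * t)) ^ (1 - (n:ℤ)) = (((1 - exp (-la * t)) ^ (n - 1) : ℝ))⁻¹ := by
    rw [show (1 - (n:ℤ)) = -((n - 1 : ℕ) : ℤ) by push_cast [Nat.cast_sub (by omega : 1 ≤ n)]; ring,
      zpow_neg, zpow_natCast]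
  have hE1 : exp (-la * t) ^ j = exp (-(j : ℝ) * la * t) := by
    rw [← Real.exp_nat_mul]; ring_nf
  have hE2 : exp (-la * t) ^ j * exp (-(((k : ℝ) + i - j) * la * t))
      = exp (-((k : ℝ) + i) * la * t) := by
    rw [← Real.exp_nat_mul, ← Real.exp_add]
    congr 1
    ring
  rw [hz, ← hE1, ← hE2]
  have hc2 : ((k : ℝ) + i - j) ≠ 0 := ne_of_gt (hcpos i j hjk)
  have hlane : la ≠ 0 := ne_of_gt hla
  have hqne : (1 : ℝ) - exp (-la * t) ≠ 0 := ne_of_gt hq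
  generalize ((k : ℝ) + (i : ℝ) - (j : ℝ)) = d at hc2 ⊢
  generalize ((1 - exp (-la * t)) ^ (n - 1) : ℝ) = Q at hQ ⊢
  field_simp [hc2, hlane, hQ]
end

section
/- Let λ > 0, let n ≥ 2 and 1 ≤ k ≤ n−1 be integers, and let t > 0. Define f(s|t) := (1+λt)/(t(1+λs)^2) and F(s|t) := s(1+λt)/(t(1+λs)). Then the integral over s from 0 to t of s · k·C(n−1,k)·F(s|t)^{n−k−1}·(1−F(s|t))^{k−1}·f(s|t) equals t − Σ_{i=0}^{k−1} Σ_{j=0}^{i} C(n−1,i) C(i,j) ((−1)^{i+j}/λ^{n−j}) ((1+λt)/t)^{n−j−1} · [ λt − (n−j−1) ln(1+λt) + Σ_{l=2}^{n−j−1} C(n−j−1,l) (−1)^l ((1+λt)^{−l+1} − 1)/(1−l) ]. -/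
open Real MeasureTheory Finset

lemma binom_expand (x : ℝ) (m : ℕ) :
    (1 - x)^m = ∑ l ∈ Finset.range (m+1), (m.choose l : ℝ) * (-1)^l * x^l := by
  rw [show (1 - x : ℝ) = (-x) + 1 by ring, add_pow]
  refine Finset.sum_congr rfl fun l hl => ?_
  rw [neg_pow]; simp; ring

lemma split_sum (f : ℕ → ℝ) (m : ℕ) (hm : 1 ≤ m) :
    ∑ l ∈ Finset.range (m+1), f l = f 0 + f 1 + ∑ l ∈ Finset.Icc 2 m, f l := by
  rw [← Finset.Ico_add_one_right_eq_Icc, Finset.range_eq_Ico,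
    ← Finset.sum_Ico_consecutive f (by omega : 0 ≤ 2) (by omega : 2 ≤ m + 1)]
  norm_num [Finset.sum_Ico_eq_sum_range, Finset.sum_range_succ]

lemma hB_deriv (la : ℝ) (hla : 0 < la) (m : ℕ) (hm : 1 ≤ m) (s : ℝ) (hs : 0 ≤ s) :
    HasDerivAt (fun s => la*s - m*Real.log (1+la*s) +
      ∑ l ∈ Finset.Icc 2 m, ((m.choose l : ℝ) * (-1)^l * ((1+la*s)^(1-(l:ℤ)) / (1-(l:ℝ)))))
      (la * (la*s/(1+la*s))^m) s := by
  have hu : (0:ℝ) < 1 + la*s := by nlinarith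
  have hu' : (1:ℝ) + la*s ≠ 0 := ne_of_gt hu
  have haff : HasDerivAt (fun s : ℝ => 1 + la*s) la s := by
    simpa using ((hasDerivAt_id s).const_mul la).const_add 1
  have h1 : HasDerivAt (fun s : ℝ => la*s) la s := by
    simpa using (hasDerivAt_id s).const_mul la
  have h2 : HasDerivAt (fun s : ℝ => (m:ℝ)*Real.log (1+la*s)) ((m:ℝ) * (la/(1+la*s))) s :=
    (haff.log hu').const_mul _
  have h3 : HasDerivAt (fun s : ℝ => ∑ l ∈ Finset.Icc 2 m,
      ((m.choose l : ℝ) * (-1)^l * ((1+la*s)^(1-(l:ℤ)) / (1-(l:ℝ)))))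
      (∑ l ∈ Finset.Icc 2 m, ((m.choose l : ℝ) * (-1)^l * (la * ((1+la*s)⁻¹)^l))) s := by
    refine HasDerivAt.fun_sum fun l hl => ?_
    have hl2 : 2 ≤ l := (Finset.mem_Icc.mp hl).1
    have hzp : HasDerivAt (fun u : ℝ => u ^ (1-(l:ℤ)))
        (((1-(l:ℤ)) : ℝ) * (1+la*s)^(1-(l:ℤ)-1)) (1+la*s) := by
      simpa using hasDerivAt_zpow (1-(l:ℤ)) (1+la*s) (Or.inl hu')
    have hcomp := (hzp.comp s haff).div_const (1-(l:ℝ))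
    have := hcomp.const_mul ((m.choose l : ℝ) * (-1)^l)
    refine this.congr_deriv (Eq.symm ?_)
    have hle : (1:ℝ) - (l:ℝ) ≠ 0 := by
      have : (2:ℝ) ≤ (l:ℝ) := by exact_mod_cast hl2
      linarith
    rw [show (1-(l:ℤ)-1) = -(l:ℤ) by ring, zpow_neg, zpow_natCast, ← inv_pow]
    push_cast
    field_simp
  have hsum := (h1.sub h2).add h3
  refine hsum.congr_deriv (Eq.symm ?_)
  have hx : la*s/(1+la*s) = 1 - (1+la*s)⁻¹ := by field_simp; ring
  rw [hx, binom_expand, Finset.mul_sum,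
    split_sum (fun l => la * ((m.choose l : ℝ) * (-1)^l * ((1+la*s)⁻¹)^l)) m hm]
  simp only [Nat.choose_zero_right, Nat.choose_one_right, pow_zero, pow_one]
  congr 1
  · push_cast; field_simp; ring
  · exact Finset.sum_congr rfl fun l hl => by ring

lemma hF_deriv (la t : ℝ) (ht : t ≠ 0) {s : ℝ} (hs : (1:ℝ) + la*s ≠ 0) :
    HasDerivAt (fun s => s*(1+la*t)/(t*(1+la*s))) ((1+la*t)/(t*(1+la*s)^2)) s := by
  have h1 : HasDerivAt (fun s : ℝ => s*(1+la*t)) (1+la*t) s := by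
    simpa using (hasDerivAt_id s).mul_const (1+la*t)
  have h2 : HasDerivAt (fun s : ℝ => t*(1+la*s)) (t*la) s := by
    simpa [mul_add] using (((hasDerivAt_id s).const_mul la).const_add 1).const_mul t
  have hd : t*(1+la*s) ≠ 0 := mul_ne_zero ht hs
  have := h1.div h2 hd
  refine this.congr_deriv (Eq.symm ?_)
  field_simp
  ring

noncomputable def Qf (la t : ℝ) (N k : ℕ) (s : ℝ) : ℝ :=
  ∑ i ∈ Finset.range k, (N.choose i : ℝ) *
    ((1 - s*(1+la*t)/(t*(1+la*s)))^i * (s*(1+la*t)/(t*(1+la*s)))^(N-i))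

lemma hQ_deriv (la t : ℝ) (hla : 0 < la) (ht : (0:ℝ) < t) (N k : ℕ) (hk : k ≤ N)
    (s : ℝ) (hs : 0 ≤ s) :
    HasDerivAt (Qf la t N k)
      ((k:ℝ) * (N.choose k : ℝ) * (1 - s*(1+la*t)/(t*(1+la*s)))^(k-1) *
        (s*(1+la*t)/(t*(1+la*s)))^(N-k) * ((1+la*t)/(t*(1+la*s)^2))) s := by
  have hu : (0:ℝ) < 1+la*s := by nlinarith
  have hFd := hF_deriv la t (ne_of_gt ht) (ne_of_gt hu)
  set F : ℝ → ℝ := fun s => s*(1+la*t)/(t*(1+la*s)) with hFdef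
  set f : ℝ → ℝ := fun s => (1+la*t)/(t*(1+la*s)^2) with hfdef
  set g : ℕ → ℝ := fun i => (i:ℝ) * (N.choose i : ℝ) * (1 - F s)^(i-1) * (F s)^(N-i) * f s with hg
  have hterm : ∀ i ∈ Finset.range k,
      HasDerivAt (fun s => (N.choose i : ℝ) * ((1 - F s)^i * (F s)^(N-i))) (g (i+1) - g i) s := by
    intro i hi
    have hik : i < k := Finset.mem_range.mp hi
    have h1 : HasDerivAt (fun s => (1 - F s)^i) ((i:ℝ) * (1 - F s)^(i-1) * (0 - f s)) s :=
      ((hasDerivAt_const s 1).sub hFd).pow i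
    have h2 : HasDerivAt (fun s => (F s)^(N-i)) (((N-i:ℕ):ℝ) * (F s)^(N-i-1) * f s) s :=
      hFd.pow (N-i)
    have hmain := (h1.mul h2).const_mul (N.choose i : ℝ)
    refine hmain.congr_deriv (Eq.symm ?_)
    have hc : ((N.choose (i+1)) : ℝ) * ((i:ℝ)+1) = (N.choose i : ℝ) * ((N:ℝ) - (i:ℝ)) := by
      have h' := Nat.choose_succ_right_eq N i
      have h'' : ((N.choose (i+1) * (i+1) : ℕ) : ℝ) = ((N.choose i * (N-i) : ℕ) : ℝ) := by
        exact_mod_cast h'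
      push_cast [Nat.cast_sub (by omega : i ≤ N)] at h''
      linarith
    simp only [hg]
    rw [show (i+1) - 1 = i from rfl, show N - (i+1) = N - i - 1 by omega]
    push_cast [Nat.cast_sub (by omega : i ≤ N)]
    linear_combination ((1 - F s)^i * (F s)^(N-i-1) * f s) * hc
  have hQd : HasDerivAt (Qf la t N k) (∑ i ∈ Finset.range k, (g (i+1) - g i)) s := by
    unfold Qf
    exact HasDerivAt.fun_sum hterm
  rw [Finset.sum_range_sub g k] at hQd
  have hg0 : g 0 = 0 := by simp [hg]
  rw [hg0, sub_zero] at hQd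
  convert hQd using 1

lemma inner_binom (x : ℝ) (N i : ℕ) (hi : i ≤ N) :
    ∑ j ∈ Finset.range (i+1), (i.choose j : ℝ) * (-1)^(i+j) * x^(N-j)
      = (1-x)^i * x^(N-i) := by
  have h : (1-x : ℝ)^i = ∑ j ∈ Finset.range (i+1), (1:ℝ)^j * (-x)^(i-j) * (i.choose j : ℝ) := by
    rw [show (1-x:ℝ) = 1 + (-x) by ring, add_pow]
  rw [h, Finset.sum_mul]
  refine Finset.sum_congr rfl fun j hj => ?_
  have hji : j ≤ i := Finset.mem_range_succ_iff.mp hj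
  rw [neg_pow, show i + j = (i-j) + 2*j by omega, pow_add, pow_mul,
    show N - j = (i-j) + (N-i) by omega, pow_add]
  simp only [one_pow, neg_one_sq]
  rw [pow_add, neg_pow]
  ring

theorem stmt_12 (la : ℝ) (hla : 0 < la) (n k : ℕ) (hn : 2 ≤ n) (hk1 : 1 ≤ k)
    (hk2 : k ≤ n - 1) (t : ℝ) (ht : 0 < t) :
    ∫ s in (0:ℝ)..t,
      s * (k * (n - 1).choose k *
        ((s * (1 + la * t) / (t * (1 + la * s))) ^ (n - k - 1) *
          (1 - s * (1 + la * t) / (t * (1 + la * s))) ^ (k - 1) *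
          ((1 + la * t) / (t * (1 + la * s) ^ 2))))
      = t - ∑ i ∈ Finset.range k, ∑ j ∈ Finset.range (i + 1),
          (n - 1).choose i * i.choose j * ((-1 : ℝ) ^ (i + j) / la ^ (n - j)) *
            ((1 + la * t) / t) ^ (n - j - 1) *
            (la * t - ((n : ℝ) - j - 1) * Real.log (1 + la * t) +
              ∑ l ∈ Finset.Icc 2 (n - j - 1),
                (n - j - 1).choose l * (-1 : ℝ) ^ l *
                  (((1 + la * t) ^ (1 - (l : ℤ)) - 1) / (1 - (l : ℝ)))) := by
  have ht' : t ≠ 0 := ne_of_gt ht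
  have h1t : (0:ℝ) < 1 + la*t := by nlinarith
  set N := n - 1 with hNdef
  have hNk : k ≤ N := hk2
  have hnk1 : n - k - 1 = N - k := by omega
  set B : ℕ → ℝ → ℝ := fun m s => la*s - m*Real.log (1+la*s) +
      ∑ l ∈ Finset.Icc 2 m, ((m.choose l : ℝ) * (-1)^l * ((1+la*s)^(1-(l:ℤ)) / (1-(l:ℝ)))) with hBdef
  set e : ℕ → ℕ → ℝ := fun i j =>
      (N.choose i : ℝ) * (i.choose j : ℝ) * (-1)^(i+j) * ((1+la*t)/t)^(N-j) / la^(N-j+1) with hedef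
  set Phi : ℝ → ℝ := fun s => s * Qf la t N k s -
      ∑ i ∈ Finset.range k, ∑ j ∈ Finset.range (i+1), e i j * B (N-j) s with hPhidef
  have hmem : ∀ i ∈ Finset.range k, ∀ j ∈ Finset.range (i+1), 1 ≤ N - j ∧ j ≤ N ∧ j < k := by
    intro i hi j hj
    have := Finset.mem_range.mp hi
    have := Finset.mem_range.mp hj
    omega
  -- derivative of Phi
  have key : ∀ s ∈ Set.uIcc (0:ℝ) t, HasDerivAt Phi
      (s * (k * ((n-1).choose k : ℝ) *
        ((s * (1 + la * t) / (t * (1 + la * s))) ^ (n - k - 1) *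
          (1 - s * (1 + la * t) / (t * (1 + la * s))) ^ (k - 1) *
          ((1 + la * t) / (t * (1 + la * s) ^ 2))))) s := by
    intro s hsmem
    rw [Set.uIcc_of_le ht.le] at hsmem
    have hs0 : 0 ≤ s := hsmem.1
    have hu : (0:ℝ) < 1 + la*s := by nlinarith
    have hQd := hQ_deriv la t hla ht N k hNk s hs0
    have hsQ := (hasDerivAt_id s).mul hQd
    have hBd : HasDerivAt (fun s => ∑ i ∈ Finset.range k, ∑ j ∈ Finset.range (i+1),
        e i j * B (N-j) s)
        (∑ i ∈ Finset.range k, ∑ j ∈ Finset.range (i+1),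
          e i j * (la * (la*s/(1+la*s))^(N-j))) s := by
      refine HasDerivAt.fun_sum fun i hi => HasDerivAt.fun_sum fun j hj => ?_
      exact (hB_deriv la hla (N-j) (hmem i hi j hj).1 s hs0).const_mul (e i j)
    have hPd := hsQ.sub hBd
    refine hPd.congr_deriv (Eq.symm ?_)
    have hBQ : ∑ i ∈ Finset.range k, ∑ j ∈ Finset.range (i+1),
        e i j * (la * (la*s/(1+la*s))^(N-j)) = Qf la t N k s := by
      unfold Qf
      refine Finset.sum_congr rfl fun i hi => ?_
      have hiN : i ≤ N := by have := Finset.mem_range.mp hi; omega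
      have hstep : ∀ j ∈ Finset.range (i+1), e i j * (la * (la*s/(1+la*s))^(N-j))
          = (N.choose i : ℝ) * ((i.choose j : ℝ) * (-1)^(i+j) *
              (s*(1+la*t)/(t*(1+la*s)))^(N-j)) := by
        intro j hj
        have hbase : s*(1+la*t)/(t*(1+la*s)) = ((1+la*t)/t) * (la*s/(1+la*s)) / la := by
          field_simp
        simp only [hedef]
        rw [hbase]
        have hla' : la ≠ 0 := ne_of_gt hla
        have hu' : (1:ℝ) + la*s ≠ 0 := ne_of_gt hu
        rw [div_pow ((1+la*t)/t * (la*s/(1+la*s))) la, mul_pow, pow_succ]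
        field_simp
      rw [Finset.sum_congr rfl hstep, ← Finset.mul_sum,
        inner_binom (s*(1+la*t)/(t*(1+la*s))) N i hiN]
    rw [hBQ, hnk1]
    simp only [id_eq]
    ring
  -- integrability
  have hden1 : ∀ s ∈ Set.uIcc (0:ℝ) t, t * (1 + la * s) ≠ 0 := by
    intro s hsmem
    rw [Set.uIcc_of_le ht.le] at hsmem
    have h0 := hsmem.1
    have h : (0:ℝ) < 1 + la*s := by nlinarith
    exact ne_of_gt (mul_pos ht h)
  have hden2 : ∀ s ∈ Set.uIcc (0:ℝ) t, t * (1 + la * s)^2 ≠ 0 := by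
    intro s hsmem
    rw [Set.uIcc_of_le ht.le] at hsmem
    have h0 := hsmem.1
    have h : (0:ℝ) < 1 + la*s := by nlinarith
    exact ne_of_gt (mul_pos ht (pow_pos h 2))
  have hFc : ContinuousOn (fun s : ℝ => s*(1+la*t)/(t*(1+la*s))) (Set.uIcc 0 t) :=
    ContinuousOn.div (by fun_prop) (by fun_prop) hden1
  have hfc : ContinuousOn (fun s : ℝ => (1+la*t)/(t*(1+la*s)^2)) (Set.uIcc 0 t) :=
    ContinuousOn.div (by fun_prop) (by fun_prop) hden2
  have hint : IntervalIntegrable (fun s =>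
      s * (k * ((n-1).choose k : ℝ) *
        ((s * (1 + la * t) / (t * (1 + la * s))) ^ (n - k - 1) *
          (1 - s * (1 + la * t) / (t * (1 + la * s))) ^ (k - 1) *
          ((1 + la * t) / (t * (1 + la * s) ^ 2))))) volume 0 t := by
    apply ContinuousOn.intervalIntegrable
    exact continuousOn_id.mul (continuousOn_const.mul
      (((hFc.pow _).mul ((continuousOn_const.sub hFc).pow _)).mul hfc))
  have hcalc : (∫ s in (0:ℝ)..t,
      s * (k * ((n-1).choose k : ℝ) *
        ((s * (1 + la * t) / (t * (1 + la * s))) ^ (n - k - 1) *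
          (1 - s * (1 + la * t) / (t * (1 + la * s))) ^ (k - 1) *
          ((1 + la * t) / (t * (1 + la * s) ^ 2))))) = Phi t - Phi 0 :=
    intervalIntegral.integral_eq_sub_of_hasDerivAt key hint
  rw [hcalc]
  -- final computation
  have hQt : Qf la t N k t = 1 := by
    unfold Qf
    have hFt : t*(1+la*t)/(t*(1+la*t)) = 1 := div_self (mul_ne_zero ht' (ne_of_gt h1t))
    rw [Finset.sum_eq_single 0]
    · rw [hFt]; simp
    · intro i hi hne
      rw [hFt]
      simp [zero_pow hne]
    · intro h
      exact absurd (Finset.mem_range.2 (by omega)) h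
  have halg : Phi t - Phi 0 = t - ∑ i ∈ Finset.range k, ∑ j ∈ Finset.range (i+1),
      e i j * (B (N-j) t - B (N-j) 0) := by
    simp only [hPhidef]
    rw [hQt]
    have hSS : (∑ i ∈ Finset.range k, ∑ j ∈ Finset.range (i+1), e i j * B (N-j) t)
        - (∑ i ∈ Finset.range k, ∑ j ∈ Finset.range (i+1), e i j * B (N-j) 0)
        = ∑ i ∈ Finset.range k, ∑ j ∈ Finset.range (i+1), e i j * (B (N-j) t - B (N-j) 0) := by
      rw [← Finset.sum_sub_distrib]
      refine Finset.sum_congr rfl fun i _ => ?_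
      rw [← Finset.sum_sub_distrib]
      exact Finset.sum_congr rfl fun j _ => (mul_sub _ _ _).symm
    rw [← hSS]
    ring
  rw [halg]
  congr 1
  refine Finset.sum_congr rfl fun i hi => Finset.sum_congr rfl fun j hj => ?_
  have hjk : j < k := (hmem i hi j hj).2.2
  have hjN : j ≤ N := (hmem i hi j hj).2.1
  have hm1 : 1 ≤ N - j := (hmem i hi j hj).1
  have hnj1 : n - j - 1 = N - j := by omega
  have hnj : n - j = (N - j) + 1 := by omega
  have hcast : ((n:ℝ) - j - 1) = ((N - j : ℕ) : ℝ) := by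
    rw [Nat.cast_sub hjN, hNdef, Nat.cast_sub (by omega : 1 ≤ n)]
    push_cast
    ring
  rw [hnj1, hnj, hcast]
  simp only [hBdef, hedef, mul_zero, add_zero, Real.log_one, one_zpow]
  have hss : (∑ l ∈ Finset.Icc 2 (N-j), (((N-j).choose l : ℝ) * (-1)^l * ((1+la*t)^(1-(l:ℤ)) / (1-(l:ℝ)))))
      - (∑ l ∈ Finset.Icc 2 (N-j), (((N-j).choose l : ℝ) * (-1)^l * (1 / (1-(l:ℝ)))))
      = ∑ l ∈ Finset.Icc 2 (N-j), (((N-j).choose l : ℝ) * (-1)^l * (((1+la*t)^(1-(l:ℤ)) - 1) / (1-(l:ℝ)))) := by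
    rw [← Finset.sum_sub_distrib]
    refine Finset.sum_congr rfl fun l _ => ?_
    ring
  linear_combination ((N.choose i : ℝ) * (i.choose j : ℝ) * (-1)^(i+j) * ((1+la*t)/t)^(N-j) / la^(N-j+1)) * hss
end

section
/- Let 0 < μ < λ and set ρ := μ/λ. For integers n ≥ 2 and 1 ≤ k ≤ n−1, the integral over s from 0 to ∞ of s · (k+1)·C(n,k+1)·λ^{n−k}·(λ−μ)^{k+2}·e^{−(λ−μ)(k+1)s}·(1−e^{−(λ−μ)s})^{n−k−1}/(λ−μe^{−(λ−μ)s})^{n+1} equals ((k+1)/λ)·C(n,k+1)·(−1)^k · Σ_{i=0}^{n−k−1} C(n−k−1,i) · (1/((k+i+1)ρ)) · (1/ρ − 1)^{k+i} · [ ln(1/(1−ρ)) − Σ_{j=1}^{k+i} C(k+i,j) ((−1)^j/j) (1 − (1/(1−ρ))^j) ]. -/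
open Real MeasureTheory
open Filter Set Topology

lemma aux_binom (r y : ℝ) (p : ℕ) :
    ∑ j ∈ Finset.range (p+1), (1 - r*y)^j * (r-1)^(p-j) * (p.choose j : ℝ) = (r*(1-y))^p := by
  rw [← add_pow]; congr 1; ring

lemma aux_shift (f : ℕ → ℝ) (p : ℕ) :
    ∑ j ∈ Finset.range (p+1), f j = f 0 + ∑ j ∈ Finset.Icc 1 p, f j := by
  have h : Finset.Icc 1 p = Finset.Ico 1 (p+1) := by rw [Finset.Ico_add_one_right_eq_Icc]
  rw [h, Finset.sum_Ico_eq_sum_range, Finset.sum_range_succ']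
  simp [add_comm]

-- limit lemma
lemma aux_tendsto_pow_log (p : ℕ) (hp : 1 ≤ p) :
    Tendsto (fun u : ℝ => log u * u ^ p) (𝓝[>] (0:ℝ)) (𝓝 0) := by
  have h := tendsto_log_mul_rpow_nhdsGT_zero (r := (p:ℝ)) (by positivity)
  refine h.congr' ?_
  filter_upwards [self_mem_nhdsWithin] with u hu
  rw [Real.rpow_natCast]

lemma aux_psi_cont (p : ℕ) (hp : 1 ≤ p) :
    ContinuousOn (fun u : ℝ => log u * u ^ p) (Icc 0 1) := by
  intro u hu
  rcases eq_or_lt_of_le hu.1 with h | h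
  · -- u = 0
    have hval : log (0:ℝ) * (0:ℝ) ^ p = 0 := by
      simp [Real.log_zero]
    rw [← h]
    refine ContinuousWithinAt.mono ?_ (Icc_subset_Ici_self)
    unfold ContinuousWithinAt
    simp only [hval]
    have hIci : Ici (0:ℝ) = insert 0 (Ioi 0) := by
      ext x; simp [le_iff_lt_or_eq, or_comm, eq_comm]
    rw [hIci, nhdsWithin_insert, Filter.tendsto_sup]
    constructor
    · simpa [hval] using (tendsto_pure_nhds (fun u : ℝ => log u * u ^ p) 0)
    · exact aux_tendsto_pow_log p hp
  · exact ((Real.continuousAt_log h.ne').mul (continuousAt_pow _ _)).continuousWithinAt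

lemma aux_cont (r : ℝ) (h0 : 0 < r) (h1 : r < 1) (p : ℕ) (hp : 1 ≤ p) :
    ContinuousOn (fun y : ℝ => (log (1 - r*y) - log (1 - y)) * (1-y)^p) (Icc 0 1) := by
  have e : ∀ y : ℝ, (log (1 - r*y) - log (1 - y)) * (1-y)^p
      = log (1 - r*y) * (1-y)^p - log (1-y) * (1-y)^p := fun y => by ring
  simp only [e]
  apply ContinuousOn.sub
  · apply ContinuousOn.mul
    · apply ContinuousOn.log
      · fun_prop
      · intro y hy
        have : r * y ≤ r * 1 := by
          apply mul_le_mul_of_nonneg_left hy.2 h0.le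
        nlinarith [hy.1, hy.2]
    · fun_prop
  · have : (fun y : ℝ => log (1-y) * (1-y)^p)
        = (fun u : ℝ => log u * u ^ p) ∘ (fun y : ℝ => 1 - y) := rfl
    rw [this]
    apply (aux_psi_cont p hp).comp (by fun_prop)
    intro y hy
    constructor
    · simp; linarith [hy.2]
    · simp; linarith [hy.1]

lemma aux_K (r : ℝ) (h0 : 0 < r) (h1 : r < 1) (p : ℕ) (hp : 1 ≤ p) :
    ∫ y in Set.Ioo (0:ℝ) 1, (log (1 - r*y) - log (1 - y)) * (1-y)^p
    = (1-r) * (-1)^p * ((1-r)/r)^p / ((p+1)*r) *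
      (log (1/(1-r)) - ∑ j ∈ Finset.Icc 1 p,
        (p.choose j : ℝ) * ((-1)^j/j) * (1 - (1/(1-r))^j)) := by
  have hr1 : (0:ℝ) < 1 - r := by linarith
  set g : ℝ → ℝ := fun y => (log (1 - r*y) - log (1 - y)) * (1-y)^p with hg
  set c : ℝ := (1-r) / ((p+1) * r^(p+1)) with hc
  set R : ℝ → ℝ := fun y => -((r-1)^p * log (1 - r*y)
      + ∑ j ∈ Finset.Icc 1 p, (p.choose j : ℝ) * (r-1)^(p-j) * (1-r*y)^j / j) with hR
  set Φ : ℝ → ℝ := fun y => -((1-y)^(p+1)) * (log (1 - r*y) - log (1 - y)) / (p+1)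
      + c * R y with hΦ
  -- derivative on Ioo (-1) 1
  have hderiv : ∀ y ∈ Ioo (-1:ℝ) 1, HasDerivAt Φ (g y) y := by
    intro y hy
    have hw : (0:ℝ) < 1 - y := by linarith [hy.2]
    have hq : (0:ℝ) < 1 - r*y := by
      rcases le_or_gt 0 y with h | h
      · nlinarith [hy.2]
      · nlinarith [hy.1]
    have h2 : HasDerivAt (fun y : ℝ => 1 - y) (-1) y := by
      simpa using (hasDerivAt_id y).const_sub 1
    have h1d : HasDerivAt (fun y : ℝ => 1 - r*y) (-r) y := by
      simpa using ((hasDerivAt_id y).const_mul r).const_sub 1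
    have hlog1 : HasDerivAt (fun y : ℝ => log (1 - r*y)) (-r / (1-r*y)) y :=
      h1d.log hq.ne'
    have hlog2 : HasDerivAt (fun y : ℝ => log (1 - y)) (-1 / (1-y)) y :=
      h2.log hw.ne'
    have hL : HasDerivAt (fun y : ℝ => log (1 - r*y) - log (1 - y))
        (-r / (1-r*y) - (-1 / (1-y))) y := hlog1.sub hlog2
    have hpow : HasDerivAt (fun y : ℝ => (1-y)^(p+1))
        ((p+1 : ℕ) * (1-y)^p * (-1)) y := by
      simpa using h2.fun_pow (p+1)
    have hΨ : HasDerivAt (fun y : ℝ => -((1-y)^(p+1)) * (log (1 - r*y) - log (1 - y)) / (p+1))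
        ((-((p+1 : ℕ) * (1-y)^p * (-1)) * (log (1 - r*y) - log (1 - y))
          + -((1-y)^(p+1)) * (-r / (1-r*y) - (-1 / (1-y)))) / (p+1)) y :=
      ((hpow.neg.mul hL)).div_const _
    have hsum : HasDerivAt (fun y : ℝ => ∑ j ∈ Finset.Icc 1 p,
          (p.choose j : ℝ) * (r-1)^(p-j) * (1-r*y)^j / j)
        (∑ j ∈ Finset.Icc 1 p,
          ((p.choose j : ℝ) * (r-1)^(p-j) * ((j : ℕ) * (1-r*y)^(j-1) * (-r)) / j)) y := by
      apply HasDerivAt.fun_sum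
      intro j hj
      exact (((h1d.pow j).const_mul _)).div_const _
    have hRd : HasDerivAt R
        (-((r-1)^p * (-r / (1-r*y)) + ∑ j ∈ Finset.Icc 1 p,
          ((p.choose j : ℝ) * (r-1)^(p-j) * ((j : ℕ) * (1-r*y)^(j-1) * (-r)) / j))) y :=
      ((hlog1.const_mul _).add hsum).neg
    have hΦd := hΨ.add (hRd.const_mul c)
    -- now rewrite the derivative expression
    refine HasDerivAt.congr_deriv hΦd ?_
    symm
    -- simplify sum
    have hsimp : ∀ j ∈ Finset.Icc 1 p,
        ((p.choose j : ℝ) * (r-1)^(p-j) * ((j : ℕ) * (1-r*y)^(j-1) * (-r)) / j)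
        = -r * ((p.choose j : ℝ) * (r-1)^(p-j) * (1-r*y)^(j-1)) := by
      intro j hj
      have hj1 : 1 ≤ j := (Finset.mem_Icc.mp hj).1
      have hjne : (j:ℝ) ≠ 0 := Nat.cast_ne_zero.mpr (by omega)
      field_simp
    rw [Finset.sum_congr rfl hsimp, ← Finset.mul_sum]
    set S1 : ℝ := ∑ j ∈ Finset.Icc 1 p, (p.choose j : ℝ) * (r-1)^(p-j) * (1-r*y)^(j-1) with hS1
    have hkey : (1-r*y) * S1 = (r*(1-y))^p - (r-1)^p := by
      have e1 : (1-r*y) * S1 = ∑ j ∈ Finset.Icc 1 p,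
          (1-r*y)^j * (r-1)^(p-j) * (p.choose j : ℝ) := by
        rw [hS1, Finset.mul_sum]
        apply Finset.sum_congr rfl
        intro j hj
        have hj1 : 1 ≤ j := (Finset.mem_Icc.mp hj).1
        have : (1-r*y) * (1-r*y)^(j-1) = (1-r*y)^j := by
          rw [← pow_succ']
          congr 1
          omega
        calc (1-r*y) * ((p.choose j : ℝ) * (r-1)^(p-j) * (1-r*y)^(j-1))
            = ((1-r*y) * (1-r*y)^(j-1)) * (r-1)^(p-j) * (p.choose j : ℝ) := by ring
          _ = (1-r*y)^j * (r-1)^(p-j) * (p.choose j : ℝ) := by rw [this]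
      rw [e1]
      have := aux_binom r y p
      rw [aux_shift (fun j => (1 - r*y)^j * (r-1)^(p-j) * (p.choose j : ℝ)) p] at this
      simp at this
      linarith [this]
    -- final algebra
    have hS1v : S1 = ((r*(1-y))^p - (r-1)^p) / (1-r*y) := by
      field_simp [hq.ne'] at hkey ⊢
      linarith [hkey]
    rw [hS1v, hg, hc]
    have hp1 : ((p:ℝ)+1) ≠ 0 := by positivity
    have hrp : r^(p+1) ≠ 0 := by positivity
    have hrwp : (r*(1-y))^p = r^p * (1-y)^p := by rw [mul_pow]
    rw [hrwp]
    set A := log (1 - r*y) with hA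
    set B := log (1 - y) with hB
    push_cast
    field_simp
    ring
  -- integrability
  have hint : IntervalIntegrable g volume 0 1 := by
    apply ContinuousOn.intervalIntegrable
    rw [uIcc_of_le (by norm_num : (0:ℝ) ≤ 1)]
    exact aux_cont r h0 h1 p hp
  -- limit at 0
  have ha : Tendsto Φ (𝓝[>] (0:ℝ)) (𝓝 (Φ 0)) :=
    ((hderiv 0 (by constructor <;> norm_num)).continuousAt.tendsto).mono_left
      nhdsWithin_le_nhds
  -- limit at 1
  have hb : Tendsto Φ (𝓝[<] (1:ℝ)) (𝓝 (c * R 1)) := by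
    have hmap : Tendsto (fun y : ℝ => 1 - y) (𝓝[<] (1:ℝ)) (𝓝[>] (0:ℝ)) := by
      apply tendsto_nhdsWithin_of_tendsto_nhds_of_eventually_within
      · exact ((continuous_const.sub continuous_id).tendsto' 1 0 (by norm_num)).mono_left
          nhdsWithin_le_nhds
      · filter_upwards [self_mem_nhdsWithin] with y hy
        simp only [Set.mem_Iio] at hy
        simp only [Set.mem_Ioi]
        linarith
    have hBt : Tendsto (fun y : ℝ => log (1-y) * (1-y)^(p+1)) (𝓝[<] (1:ℝ)) (𝓝 0) :=
      (aux_tendsto_pow_log (p+1) (by omega)).comp hmap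
    have hAt : Tendsto (fun y : ℝ => log (1-r*y) * (1-y)^(p+1)) (𝓝[<] (1:ℝ)) (𝓝 0) := by
      have hc1 : ContinuousAt (fun y : ℝ => log (1-r*y) * (1-y)^(p+1)) 1 := by
        apply ContinuousAt.mul
        · exact (Real.continuousAt_log (by nlinarith)).comp (by fun_prop)
        · fun_prop
      have h := hc1.tendsto.mono_left (nhdsWithin_le_nhds (s := Iio (1:ℝ)))
      simpa using h
    have hΨt : Tendsto (fun y : ℝ => -((1-y)^(p+1)) * (log (1 - r*y) - log (1 - y)) / ((p:ℝ)+1))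
        (𝓝[<] (1:ℝ)) (𝓝 0) := by
      have h := (hAt.sub hBt).neg.div_const ((p:ℝ)+1)
      simp only [sub_zero, neg_zero, zero_div, sub_self] at h
      refine h.congr (fun y => by push_cast; ring)
    have hRt : Tendsto R (𝓝[<] (1:ℝ)) (𝓝 (R 1)) := by
      have hcR : ContinuousAt R 1 := by
        rw [hR]
        apply ContinuousAt.neg
        apply ContinuousAt.add
        · apply ContinuousAt.mul continuousAt_const
          exact (Real.continuousAt_log (by nlinarith)).comp (by fun_prop)
        · fun_prop
      exact hcR.tendsto.mono_left nhdsWithin_le_nhds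
    have hfin := hΨt.add ((hRt.const_mul c))
    rw [hΦ]
    simpa only [zero_add] using hfin
  -- FTC
  have hftc := intervalIntegral.integral_eq_sub_of_hasDerivAt_of_tendsto
    (by norm_num : (0:ℝ) < 1)
    (fun y hy => hderiv y ⟨by linarith [hy.1], hy.2⟩) hint ha hb
  have hIoo : ∫ y in Set.Ioo (0:ℝ) 1, g y = ∫ y in (0:ℝ)..1, g y := by
    rw [intervalIntegral.integral_of_le (by norm_num : (0:ℝ) ≤ 1),
      MeasureTheory.integral_Ioc_eq_integral_Ioo]
  rw [hIoo, hftc]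
  -- final algebra
  have hΦ0 : Φ 0 = c * R 0 := by
    simp [hΦ]
  rw [hΦ0, ← mul_sub]
  have merge : ∑ j ∈ Finset.Icc 1 p, (p.choose j:ℝ)*(r-1)^(p-j)*(1-(1-r)^j)/j
      = (∑ j ∈ Finset.Icc 1 p, (p.choose j:ℝ)*(r-1)^(p-j)/j)
        - ∑ j ∈ Finset.Icc 1 p, (p.choose j:ℝ)*(r-1)^(p-j)*(1-r)^j/j := by
    rw [← Finset.sum_sub_distrib]
    exact Finset.sum_congr rfl (fun j hj => by ring)
  have hR10 : R 1 - R 0 = -((r-1)^p * log (1-r))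
      + ∑ j ∈ Finset.Icc 1 p, (p.choose j : ℝ) * (r-1)^(p-j) * (1 - (1-r)^j) / j := by
    rw [hR]
    simp only [mul_one, mul_zero, sub_zero, Real.log_one, one_pow]
    rw [merge]
    ring
  rw [hR10]
  have hlog1r : log (1/(1-r)) = -log (1-r) := by rw [one_div, Real.log_inv]
  have hrne : (1-r) ≠ 0 := hr1.ne'
  have hp1 : ((p:ℝ)+1) ≠ 0 := by positivity
  rw [hlog1r, mul_add, mul_sub, Finset.mul_sum, Finset.mul_sum]
  conv_rhs => rw [sub_eq_add_neg, ← Finset.sum_neg_distrib]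
  congr 1
  · rw [hc, show (r-1 : ℝ) = -(1-r) by ring, neg_pow, div_pow]
    field_simp
    ring
  · apply Finset.sum_congr rfl
    intro j hj
    obtain ⟨hj1, hj2⟩ := Finset.mem_Icc.mp hj
    have hjne : (j:ℝ) ≠ 0 := Nat.cast_ne_zero.mpr (by omega)
    have hvne : ((1-r):ℝ)^j ≠ 0 := pow_ne_zero _ hrne
    have e2 : ((-1:ℝ))^(p-j) * ((-1:ℝ))^j = (-1)^p := by
      rw [← pow_add]
      congr 1
      omega
    have e3 : ((1-r):ℝ)^(p-j) = (1-r)^p / (1-r)^j := by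
      rw [eq_div_iff hvne, ← pow_add]
      congr 1
      omega
    have e1 : (r-1:ℝ)^(p-j) = (-1)^(p-j)*(1-r)^(p-j) := by
      rw [show (r-1:ℝ) = -(1-r) by ring, neg_pow]
    rw [hc, e1, e3, div_pow, one_div_pow]
    rcases Nat.even_or_odd j with hje | hjo
    · have o1 : ((-1:ℝ))^j = 1 := hje.neg_one_pow
      have o2 : ((-1:ℝ))^(p-j) = (-1)^p := by
        rw [o1, mul_one] at e2
        exact e2
      rw [o1, o2]
      field_simp
      ring
    · have o1 : ((-1:ℝ))^j = -1 := hjo.neg_one_pow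
      have o2 : ((-1:ℝ))^(p-j) = -((-1:ℝ)^p) := by
        rw [o1] at e2
        linarith
      rw [o1, o2]
      field_simp
      ring


-- substitution lemma
set_option maxHeartbeats 2000000 in
lemma aux_subst (la mu : ℝ) (hmu : 0 < mu) (hml : mu < la) (k m : ℕ) :
    ∫ s in Set.Ioi (0:ℝ),
      s * ((k + 1) * ((k+m+1).choose (k + 1)) * la ^ (m+1) * (la - mu) ^ (k + 2) *
        exp (-(la - mu) * ((k + 1) * s)) * (1 - exp (-(la - mu) * s)) ^ m /
        (la - mu * exp (-(la - mu) * s)) ^ (k+m+2))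
    = ∫ y in Set.Ioo (0:ℝ) 1,
        (((k:ℝ) + 1) * ((k+m+1).choose (k + 1)) / (la - mu)) *
          ((log (1 - (mu/la)*y) - log (1 - y)) * ((1-y)^k * y^m)) := by
  have hla : (0:ℝ) < la := lt_trans hmu hml
  have hd : (0:ℝ) < la - mu := by linarith
  set d : ℝ := la - mu with hdd
  set f : ℝ → ℝ := fun y => (1/d) * (log (la - mu*y) - log (la*(1-y))) with hf
  have hApos : ∀ y ∈ Ioo (0:ℝ) 1, (0:ℝ) < la - mu*y := by
    intro y hy
    nlinarith [hy.1, hy.2]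
  have hBpos : ∀ y ∈ Ioo (0:ℝ) 1, (0:ℝ) < la*(1-y) := by
    intro y hy
    have := hy.2
    nlinarith
  have hfd : ∀ y ∈ Ioo (0:ℝ) 1, HasDerivAt f (1/((1-y)*(la-mu*y))) y := by
    intro y hy
    have hA := hApos y hy
    have hB := hBpos y hy
    have hw : (0:ℝ) < 1 - y := by linarith [hy.2]
    have h1 : HasDerivAt (fun y : ℝ => la - mu*y) (-mu) y := by
      simpa using ((hasDerivAt_id y).const_mul mu).const_sub la
    have h2 : HasDerivAt (fun y : ℝ => la*(1-y)) (la * (-1)) y := by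
      exact (((hasDerivAt_id y).const_sub 1)).const_mul la
    have hd1 : HasDerivAt f ((1/d) * (-mu/(la-mu*y) - (la*(-1))/(la*(1-y)))) y :=
      (((h1.log hA.ne').sub (h2.log hB.ne'))).const_mul (1/d)
    convert hd1 using 1
    field_simp
    rw [hdd, mul_comm y mu]
    field_simp [hA.ne']
    ring
  have hderivW : ∀ y ∈ Ioo (0:ℝ) 1,
      HasDerivWithinAt f (1/((1-y)*(la-mu*y))) (Ioo 0 1) y :=
    fun y hy => (hfd y hy).hasDerivWithinAt
  have hmono : StrictMonoOn f (Ioo 0 1) := by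
    apply strictMonoOn_of_deriv_pos (convex_Ioo 0 1)
    · intro y hy
      exact (hfd y hy).continuousAt.continuousWithinAt
    · intro y hy
      rw [interior_Ioo] at hy
      rw [(hfd y hy).deriv]
      have hw : (0:ℝ) < 1 - y := by linarith [hy.2]
      have hA := hApos y hy
      positivity
  have hinj : InjOn f (Ioo 0 1) := hmono.injOn
  have himage : f '' Ioo 0 1 = Ioi (0:ℝ) := by
    apply Subset.antisymm
    · rintro t ⟨y, hy, rfl⟩
      have hA := hApos y hy
      have hB := hBpos y hy
      have hlt : la*(1-y) < la - mu*y := by nlinarith [hy.1, hy.2]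
      have : 0 < log (la - mu*y) - log (la*(1-y)) := by
        have := Real.log_lt_log hB hlt
        linarith
      simp only [Set.mem_Ioi, hf]
      positivity
    · intro t ht
      simp only [Set.mem_Ioi] at ht
      set e : ℝ := exp (-(d*t)) with he
      have he0 : 0 < e := exp_pos _
      have he1 : e < 1 := by
        rw [he, exp_lt_one_iff]
        nlinarith
      have hden : 0 < la - mu*e := by nlinarith
      refine ⟨la*(1-e)/(la-mu*e), ⟨?_, ?_⟩, ?_⟩
      · apply div_pos (by nlinarith) hden
      · rw [div_lt_one hden]
        nlinarith
      · have hA : la - mu*(la*(1-e)/(la-mu*e)) = la*d/(la-mu*e) := by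
          field_simp
          ring
        have hB : la*(1-(la*(1-e)/(la-mu*e))) = (la*d/(la-mu*e))*e := by
          field_simp
          have hX : la - e*mu ≠ 0 := by rw [mul_comm]; exact hden.ne'
          rw [eq_div_iff hX, sub_mul, div_mul_cancel₀ _ hX, hdd]
          ring
        simp only [hf]
        rw [hA, hB]
        have hApos' : (0:ℝ) < la*d/(la-mu*e) := by positivity
        rw [Real.log_mul hApos'.ne' he0.ne', he, Real.log_exp]
        field_simp
        ring
  rw [← himage, integral_image_eq_integral_abs_deriv_smul measurableSet_Ioo hderivW hinj]
  apply setIntegral_congr_fun measurableSet_Ioo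
  intro y hy
  have hA := hApos y hy
  have hB := hBpos y hy
  have hw : (0:ℝ) < 1 - y := by linarith [hy.2]
  have hy0 : (0:ℝ) < y := hy.1
  -- exp identities
  have hexp : exp (-d * f y) = la*(1-y)/(la-mu*y) := by
    have : -d * f y = log (la*(1-y)) - log (la - mu*y) := by
      simp only [hf]
      field_simp
      ring
    rw [this, ← Real.log_div hB.ne' hA.ne', Real.exp_log (by positivity)]
  have hexp2 : exp (-d * (((k:ℝ)+1) * f y)) = (la*(1-y)/(la-mu*y))^(k+1) := by
    have : -d * (((k:ℝ)+1) * f y) = ((k+1:ℕ):ℝ) * (-d * f y) := by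
      push_cast
      ring
    rw [this, Real.exp_nat_mul, hexp]
  have hfy : f y = (1/d) * (log (1 - (mu/la)*y) - log (1 - y)) := by
    have e1 : la - mu*y = la * (1 - (mu/la)*y) := by field_simp
    have e2 : log (la - mu*y) = log la + log (1 - (mu/la)*y) := by
      rw [e1, Real.log_mul hla.ne' (by nlinarith [hA] : (1 - (mu/la)*y) ≠ 0)]
    have e3 : log (la*(1-y)) = log la + log (1-y) := by
      rw [Real.log_mul hla.ne' hw.ne']
    simp only [hf]
    rw [e2, e3]
    ring
  dsimp only
  rw [smul_eq_mul, hexp2, hexp]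
  have h3 : 1 - la*(1-y)/(la-mu*y) = d*y/(la-mu*y) := by
    rw [eq_div_iff hA.ne', sub_mul, div_mul_cancel₀ _ hA.ne', hdd]
    ring
  have h4 : la - mu*(la*(1-y)/(la-mu*y)) = la*d/(la-mu*y) := by
    field_simp
    ring
  rw [h3, h4, hfy]
  rw [abs_of_pos (by positivity : (0:ℝ) < 1/((1-y)*(la-mu*y)))]
  have hq : (la - mu*y) ≠ 0 := hA.ne'
  generalize (log (1 - (mu/la)*y) - log (1 - y)) = Lv
  have e1 : (la*(1-y)/(la-mu*y))^(k+1) = la^(k+1)*(1-y)^(k+1)/(la-mu*y)^(k+1) := by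
    rw [div_pow, mul_pow]
  have e2 : (d*y/(la-mu*y))^m = d^m*y^m/(la-mu*y)^m := by
    rw [div_pow, mul_pow]
  have e3 : (la*d/(la-mu*y))^(k+m+2) = la^(k+m+2)*d^(k+m+2)/(la-mu*y)^(k+m+2) := by
    rw [div_pow, mul_pow]
  rw [e1, e2, e3]
  have h1' : (1-y) ≠ 0 := hw.ne'
  have h3' : la ≠ 0 := hla.ne'
  have h4' : d ≠ 0 := hd.ne'
  clear_value d
  clear hdd hf hexp hexp2 hfy h3 h4 hfd hderivW hmono hinj himage hApos hBpos e1 e2 e3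
  generalize la - mu*y = X at hq ⊢
  field_simp
  ring

set_option maxHeartbeats 2000000 in
theorem stmt_14 (la mu : ℝ) (hmu : 0 < mu) (hml : mu < la) (n k : ℕ)
    (hn : 2 ≤ n) (hk1 : 1 ≤ k) (hk2 : k ≤ n - 1) :
    ∫ s in Set.Ioi (0:ℝ),
      s * ((k + 1) * n.choose (k + 1) * la ^ (n - k) * (la - mu) ^ (k + 2) *
        exp (-(la - mu) * ((k + 1) * s)) * (1 - exp (-(la - mu) * s)) ^ (n - k - 1) /
        (la - mu * exp (-(la - mu) * s)) ^ (n + 1))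
      = ((k + 1 : ℝ) / la) * n.choose (k + 1) * (-1 : ℝ) ^ k *
          ∑ i ∈ Finset.range (n - k),
            (n - k - 1).choose i * (1 / (((k : ℝ) + i + 1) * (mu / la))) *
              (1 / (mu / la) - 1) ^ (k + i) *
              (Real.log (1 / (1 - mu / la)) -
                ∑ j ∈ Finset.Icc 1 (k + i),
                  (k + i).choose j * ((-1 : ℝ) ^ j / j) *
                    (1 - (1 / (1 - mu / la)) ^ j)) := by
  have hla : (0:ℝ) < la := lt_trans hmu hml
  obtain ⟨m, rfl⟩ : ∃ m, n = k + m + 1 := ⟨n - k - 1, by omega⟩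
  have h1 : k + m + 1 - k = m + 1 := by omega
  have h2 : k + m + 1 - k - 1 = m := by omega
  have h3 : k + m + 1 + 1 = k + m + 2 := by omega
  rw [h2, h1, h3, aux_subst la mu hmu hml k m]
  have hr0 : (0:ℝ) < mu/la := div_pos hmu hla
  have hr1 : mu/la < 1 := (div_lt_one hla).mpr hml
  set c0 : ℝ := ((k:ℝ) + 1) * ((k+m+1).choose (k + 1) : ℝ) / (la - mu) with hc0
  -- binomial expansion of y^m
  have hym : ∀ y : ℝ, y^m = ∑ i ∈ Finset.range (m+1),
      ((m.choose i : ℝ) * (-1)^i) * (1-y)^i := by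
    intro y
    have h := add_pow (y-1) 1 m
    simp only [one_pow, mul_one] at h
    have hy' : y^m = ((y-1)+1)^m := by norm_num
    rw [hy', h]
    apply Finset.sum_congr rfl
    intro i hi
    rw [show (y-1 : ℝ) = -(1-y) by ring, neg_pow]
    ring
  have hpt : ∀ y : ℝ, c0 * ((log (1 - (mu/la)*y) - log (1 - y)) * ((1-y)^k * y^m))
      = ∑ i ∈ Finset.range (m+1), (c0 * (m.choose i : ℝ) * (-1)^i) *
          ((log (1 - (mu/la)*y) - log (1 - y)) * (1-y)^(k+i)) := by
    intro y
    rw [hym y]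
    simp only [Finset.mul_sum]
    apply Finset.sum_congr rfl
    intro i hi
    rw [pow_add]
    ring
  simp only [hpt]
  rw [MeasureTheory.integral_finset_sum]
  swap
  · intro i hi
    apply MeasureTheory.Integrable.const_mul
    have hc := aux_cont (mu/la) hr0 hr1 (k+i) (by omega)
    exact (hc.integrableOn_compact isCompact_Icc).mono_set Set.Ioo_subset_Icc_self
  simp only [MeasureTheory.integral_const_mul]
  have hK : ∀ i ∈ Finset.range (m+1),
      c0 * ((m.choose i : ℕ):ℝ) * (-1)^i *
        ∫ y in Set.Ioo (0:ℝ) 1, (log (1 - (mu/la)*y) - log (1 - y)) * (1-y)^(k+i)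
      = c0 * ((m.choose i : ℕ):ℝ) * (-1)^i *
        ((1-(mu/la)) * (-1)^(k+i) * ((1-(mu/la))/(mu/la))^(k+i) / ((((k+i : ℕ):ℝ)+1) * (mu/la)) *
        (log (1/(1-(mu/la))) - ∑ j ∈ Finset.Icc 1 (k+i),
          ((k+i).choose j : ℝ) * ((-1)^j/j) * (1 - (1/(1-(mu/la)))^j))) := by
    intro i hi
    rw [aux_K (mu/la) hr0 hr1 (k+i) (by omega)]
  rw [Finset.sum_congr rfl (fun i hi => hK i hi)]
  rw [Finset.mul_sum]
  apply Finset.sum_congr rfl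
  intro i hi
  have hrne : (mu/la) ≠ 0 := hr0.ne'
  have h1rne : (1 - mu/la) ≠ 0 := by
    have : 0 < 1 - mu/la := by linarith
    exact this.ne'
  have s2 : ((1-mu/la)/(mu/la)) = (1/(mu/la) - 1) := by
    field_simp
  have s1' : ((-1:ℝ))^(k+i) = (-1)^k * (-1)^i := pow_add (-1) k i
  rw [s2, s1', hc0]
  generalize (log (1/(1-mu/la)) - ∑ j ∈ Finset.Icc 1 (k+i),
      ((k+i).choose j : ℝ) * ((-1)^j/j) * (1 - (1/(1-mu/la))^j)) = B
  have hki : ((k+i:ℕ):ℝ) + 1 ≠ 0 := by positivity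
  have hki2 : ((k:ℝ) + (i:ℝ) + 1) ≠ 0 := by positivity
  have hdne : (la - mu) ≠ 0 := by linarith
  have hcast : ((k+i:ℕ):ℝ) = (k:ℝ) + (i:ℝ) := by push_cast; ring
  rw [hcast]
  rcases Nat.even_or_odd i with hie | hio
  · rw [hie.neg_one_pow]
    field_simp
  · rw [hio.neg_one_pow]
    field_simp
end

section
/- Let λ > 0 and let n ≥ 2 and 1 ≤ k ≤ n−1 be integers. Then the integral over s from 0 to ∞ of s · (k+1)·C(n,k+1)·λ·(e^{λs} − 1)^{n−k−1}·e^{−λsn} equals Σ_{i=k+1}^{n} 1/(λ i). -/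
open Real MeasureTheory Set Filter

lemma hasDeriv_aux (c : ℝ) (hc : c ≠ 0) (x : ℝ) :
    HasDerivAt (fun s => -((s/c) + 1/c^2) * Real.exp (-(c*s))) (x * Real.exp (-(c*x))) x := by
  have h1 : HasDerivAt (fun s : ℝ => -((s/c) + 1/c^2)) (-(1/c)) x :=
    (((hasDerivAt_id x).div_const c).add_const (1/c^2)).neg
  have h2 : HasDerivAt (fun s : ℝ => Real.exp (-(c*s))) (-c * Real.exp (-(c*x))) x := by
    have := (((hasDerivAt_id x).const_mul c).neg).exp
    simpa [mul_comm] using this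
  refine (h1.fun_mul h2).congr_deriv ?_
  field_simp
  ring

lemma tendsto_aux (c : ℝ) (hc : 0 < c) :
    Tendsto (fun s => -((s/c) + 1/c^2) * Real.exp (-(c*s))) atTop (nhds 0) := by
  have h1 : Tendsto (fun x : ℝ => x * Real.exp (-x)) atTop (nhds 0) := by
    simpa using tendsto_pow_mul_exp_neg_atTop_nhds_zero 1
  have h2 : Tendsto (fun s : ℝ => c * s) atTop atTop :=
    Tendsto.const_mul_atTop hc tendsto_id
  have h3 := h1.comp h2
  have h4 : Tendsto (fun s : ℝ => Real.exp (-(c*s))) atTop (nhds 0) :=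
    Real.tendsto_exp_neg_atTop_nhds_zero.comp h2
  have h5 := (h3.const_mul (-(1/c^2))).add (h4.const_mul (-(1/c^2)))
  simp only [mul_zero, add_zero] at h5
  refine h5.congr fun s => ?_
  simp only [Function.comp]
  field_simp
  ring

lemma baseInt (c : ℝ) (hc : 0 < c) :
    IntegrableOn (fun s : ℝ => s * Real.exp (-(c*s))) (Ioi 0) := by
  refine integrableOn_Ioi_deriv_of_nonneg' (g := fun s => -((s/c) + 1/c^2) * Real.exp (-(c*s)))
    (fun x _ => hasDeriv_aux c hc.ne' x) (fun x hx => ?_) (tendsto_aux c hc)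
  exact mul_nonneg (le_of_lt hx) (Real.exp_pos _).le

lemma baseVal (c : ℝ) (hc : 0 < c) :
    ∫ s in Ioi (0:ℝ), s * Real.exp (-(c*s)) = 1/c^2 := by
  have := integral_Ioi_of_hasDerivAt_of_nonneg' (g := fun s => -((s/c) + 1/c^2) * Real.exp (-(c*s)))
    (fun x _ => hasDeriv_aux c hc.ne' x)
    (fun x hx => mul_nonneg (le_of_lt hx) (Real.exp_pos _).le) (tendsto_aux c hc)
  rw [this]
  norm_num

lemma integ (la : ℝ) (hla : 0 < la) (m : ℕ) (c : ℝ) (hc : (m:ℝ) < c) :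
    IntegrableOn (fun s : ℝ => s * ((Real.exp (la*s)-1)^m * Real.exp (-(la*s*c)))) (Ioi 0) := by
  have hpos : 0 < la*(c-m) := by nlinarith
  refine (baseInt _ hpos).mono' ?_ ?_
  · apply Continuous.aestronglyMeasurable
    fun_prop
  · filter_upwards [ae_restrict_mem measurableSet_Ioi] with s hs
    have hs0 : (0:ℝ) < s := hs
    have h1 : (0:ℝ) ≤ Real.exp (la*s) - 1 := by
      have : (1:ℝ) ≤ Real.exp (la*s) := Real.one_le_exp (by positivity)
      linarith
    have h2 : (Real.exp (la*s)-1)^m ≤ (Real.exp (la*s))^m :=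
      pow_le_pow_left₀ h1 (by linarith [Real.exp_pos (la*s)]) m
    rw [Real.norm_eq_abs, abs_of_nonneg
      (mul_nonneg hs0.le (mul_nonneg (pow_nonneg h1 m) (Real.exp_pos _).le))]
    have h3 : (Real.exp (la*s))^m * Real.exp (-(la*s*c)) = Real.exp (-(la*(c-m)*s)) := by
      rw [← Real.exp_nat_mul, ← Real.exp_add]
      congr 1
      ring
    calc s * ((Real.exp (la*s)-1)^m * Real.exp (-(la*s*c)))
        ≤ s * ((Real.exp (la*s))^m * Real.exp (-(la*s*c))) := by
          apply mul_le_mul_of_nonneg_left _ hs0.le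
          exact mul_le_mul_of_nonneg_right h2 (Real.exp_pos _).le
      _ = s * Real.exp (-(la*(c-m)*s)) := by rw [h3]

lemma key (la : ℝ) (hla : 0 < la) (m : ℕ) : ∀ a : ℕ,
    ∫ s in Ioi (0:ℝ), s * ((Real.exp (la*s)-1)^m * Real.exp (-(la*s*((m+a+1 : ℕ) : ℝ)))) =
      ((m.factorial * a.factorial / (m+a+1).factorial) / la^2) *
        ∑ i ∈ Finset.Icc (a+1) (m+a+1), 1/(i:ℝ) := by
  induction m with
  | zero =>
    intro a
    have h1 : ∀ s : ℝ, s * ((Real.exp (la*s)-1)^0 * Real.exp (-(la*s*((0+a+1 : ℕ) : ℝ))))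
        = s * Real.exp (-((la*(a+1))*s)) := by
      intro s
      push_cast
      ring_nf
    rw [show (fun s : ℝ => s * ((Real.exp (la*s)-1)^0 * Real.exp (-(la*s*((0+a+1 : ℕ) : ℝ)))))
        = fun s : ℝ => s * Real.exp (-((la*(a+1))*s)) from funext h1]
    rw [baseVal (la*((a:ℝ)+1)) (by positivity)]
    simp only [show (0:ℕ)+a+1 = a+1 from by omega]
    rw [Finset.Icc_self, Finset.sum_singleton]
    rw [show ((a+1 : ℕ).factorial : ℝ) = ((a:ℝ)+1) * a.factorial from by
      rw [Nat.factorial_succ]; push_cast; ring]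
    have ha : ((a:ℝ)+1) ≠ 0 := by positivity
    have hfa : (a.factorial : ℝ) ≠ 0 := Nat.cast_ne_zero.mpr (Nat.factorial_ne_zero _)
    push_cast
    field_simp
    ring
  | succ m ih =>
    intro a
    have hsplit : ∀ s : ℝ, s * ((Real.exp (la*s)-1)^(m+1) * Real.exp (-(la*s*((m+1+a+1 : ℕ) : ℝ))))
        = s * ((Real.exp (la*s)-1)^m * Real.exp (-(la*s*((m+a+1 : ℕ) : ℝ))))
          - s * ((Real.exp (la*s)-1)^m * Real.exp (-(la*s*((m+(a+1)+1 : ℕ) : ℝ)))) := by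
      intro s
      have gen : ∀ x : ℝ, s * ((Real.exp (la*s)-1)^(m+1) * Real.exp (-(la*s*(x+1))))
          = s * ((Real.exp (la*s)-1)^m * Real.exp (-(la*s*x)))
            - s * ((Real.exp (la*s)-1)^m * Real.exp (-(la*s*(x+1)))) := by
        intro x
        have hx : Real.exp (la*s) * Real.exp (-(la*s*(x+1))) = Real.exp (-(la*s*x)) := by
          rw [← Real.exp_add]; congr 1; ring
        rw [pow_succ, ← hx]; ring
      have c1 : ((m+1+a+1 : ℕ) : ℝ) = ((m+a+1 : ℕ) : ℝ) + 1 := by push_cast; ring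
      have c2 : ((m+(a+1)+1 : ℕ) : ℝ) = ((m+a+1 : ℕ) : ℝ) + 1 := by push_cast; ring
      rw [c1, c2]
      exact gen _
    rw [show (fun s : ℝ => s * ((Real.exp (la*s)-1)^(m+1) * Real.exp (-(la*s*((m+1+a+1 : ℕ) : ℝ)))))
        = fun s : ℝ => s * ((Real.exp (la*s)-1)^m * Real.exp (-(la*s*((m+a+1 : ℕ) : ℝ))))
          - s * ((Real.exp (la*s)-1)^m * Real.exp (-(la*s*((m+(a+1)+1 : ℕ) : ℝ)))) from funext hsplit]
    rw [integral_sub (integ la hla m _ (by push_cast; linarith))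
      (integ la hla m _ (by push_cast; linarith))]
    rw [ih a, ih (a+1)]
    simp only [show m+(a+1)+1 = m+a+1+1 from by omega, show m+1+a+1 = m+a+1+1 from by omega]
    have hS1 := Finset.sum_Icc_succ_top (show a+1 ≤ m+a+1+1 from by omega) (fun i : ℕ => 1/(i:ℝ))
    have hins : Finset.Icc (a+1) (m+a+1+1) = insert (a+1) (Finset.Icc (a+1+1) (m+a+1+1)) := by
      ext x; simp only [Finset.mem_Icc, Finset.mem_insert]; omega
    have hS2 : ∑ i ∈ Finset.Icc (a+1) (m+a+1+1), 1/(i:ℝ)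
        = 1/((a:ℝ)+1) + ∑ i ∈ Finset.Icc (a+1+1) (m+a+1+1), 1/(i:ℝ) := by
      rw [hins, Finset.sum_insert (by simp)]
      push_cast
      ring
    set S := ∑ i ∈ Finset.Icc (a+1) (m+a+1+1), 1/(i:ℝ) with hSdef
    have e1 : ∑ i ∈ Finset.Icc (a+1) (m+a+1), 1/(i:ℝ) = S - 1/((m:ℝ)+(a:ℝ)+1+1) := by
      push_cast at hS1
      linarith
    have e2 : ∑ i ∈ Finset.Icc (a+1+1) (m+a+1+1), 1/(i:ℝ) = S - 1/((a:ℝ)+1) := by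
      linarith
    rw [e1, e2]
    have f1 : ((m+a+1+1).factorial : ℝ) = ((m:ℝ)+a+2) * (m+a+1).factorial := by
      rw [Nat.factorial_succ]; push_cast; ring
    have f2 : ((m+1).factorial : ℝ) = ((m:ℝ)+1) * m.factorial := by
      rw [Nat.factorial_succ]; push_cast; ring
    have f3 : ((a+1).factorial : ℝ) = ((a:ℝ)+1) * a.factorial := by
      rw [Nat.factorial_succ]; push_cast; ring
    rw [f1, f2, f3]
    have h1 : ((m+a+1).factorial : ℝ) ≠ 0 := Nat.cast_ne_zero.mpr (Nat.factorial_ne_zero _)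
    have h2 : ((m:ℝ)+a+2) ≠ 0 := by positivity
    have h3 : ((a:ℝ)+1) ≠ 0 := by positivity
    have h4 : la ≠ 0 := hla.ne'
    field_simp
    ring

theorem stmt_15 (la : ℝ) (hla : 0 < la) (n k : ℕ) (hn : 2 ≤ n) (hk1 : 1 ≤ k)
    (hk2 : k ≤ n - 1) :
    ∫ s in Set.Ioi (0:ℝ),
      s * ((k + 1) * n.choose (k + 1) * la * (exp (la * s) - 1) ^ (n - k - 1) *
        exp (-(la * s * n)))
      = ∑ i ∈ Finset.Icc (k + 1) n, 1 / (la * i) := by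
  have hk : k + 1 ≤ n := by omega
  set m := n - k - 1 with hm
  have hmn : m + k + 1 = n := by omega
  have hlhs : (∫ s in Ioi (0:ℝ),
      s * (((k:ℝ) + 1) * (n.choose (k+1) : ℝ) * la * (Real.exp (la*s) - 1) ^ m *
        Real.exp (-(la*s*(n:ℝ)))))
      = (((k:ℝ)+1) * (n.choose (k+1) : ℝ) * la) *
        ∫ s in Ioi (0:ℝ), s * ((Real.exp (la*s)-1)^m * Real.exp (-(la*s*((m+k+1 : ℕ):ℝ)))) := by
    rw [← integral_const_mul]
    congr 1
    funext s
    rw [hmn]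
    ring
  rw [hlhs, key la hla m k, hmn]
  have hch : ((k:ℝ)+1) * (n.choose (k+1) : ℝ) * (m.factorial : ℝ) * (k.factorial : ℝ)
      = (n.factorial : ℝ) := by
    have h := Nat.choose_mul_factorial_mul_factorial hk
    have h2 : n - (k+1) = m := by omega
    rw [h2, Nat.factorial_succ] at h
    push_cast [← h]
    ring
  have hsum : ∑ i ∈ Finset.Icc (k+1) n, 1/(la*(i:ℝ))
      = (1/la) * ∑ i ∈ Finset.Icc (k+1) n, 1/(i:ℝ) := by
    rw [Finset.mul_sum]
    refine Finset.sum_congr rfl fun i _ => ?_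
    rw [one_div, one_div, one_div, mul_inv]
  rw [hsum]
  have hfn : (n.factorial : ℝ) ≠ 0 := Nat.cast_ne_zero.mpr (Nat.factorial_ne_zero _)
  have hc : ((k:ℝ)+1) * (n.choose (k+1) : ℝ) * la *
      (((m.factorial : ℝ) * (k.factorial : ℝ) / (n.factorial : ℝ))/la^2) = 1/la := by
    field_simp
    linear_combination hch
  rw [show ((k:ℝ)+1) * (n.choose (k+1) : ℝ) * la *
      (((m.factorial : ℝ) * (k.factorial : ℝ) / (n.factorial : ℝ))/la^2 *
        ∑ i ∈ Finset.Icc (k+1) n, 1/(i:ℝ))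
      = (((k:ℝ)+1) * (n.choose (k+1) : ℝ) * la *
        (((m.factorial : ℝ) * (k.factorial : ℝ) / (n.factorial : ℝ))/la^2)) *
        ∑ i ∈ Finset.Icc (k+1) n, 1/(i:ℝ) from by ring, hc]
end

section
/- Let λ > 0 and let n ≥ 2 and 1 ≤ k ≤ n−1 be integers. Then the integral over s from 0 to ∞ of s · (k+1)·C(n,k+1)·λ^{n−k}·s^{n−k−1}/(1+λs)^{n+1} equals (n−k)/(λk). -/
open Real MeasureTheory

open Set Filter


lemma integ_aux (la : ℝ) (hla : 0 < la) (m p : ℕ) (h : m < p) :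
    IntegrableOn (fun s : ℝ => s ^ m / (1 + la * s) ^ (p + 1)) (Ioi 0) := by
  have hmeas : ∀ s : ℝ, 0 ≤ s → (0:ℝ) < 1 + la * s := by
    intro s hs; nlinarith
  have hcont : ContinuousOn (fun s : ℝ => s ^ m / (1 + la * s) ^ (p + 1)) (Ici 0) := by
    apply ContinuousOn.div (by fun_prop) (by fun_prop)
    intro s hs
    exact pow_ne_zero _ (ne_of_gt (hmeas s hs))
  have h1 : IntegrableOn (fun s : ℝ => s ^ m / (1 + la * s) ^ (p + 1)) (Ioc 0 1) := by
    apply (hcont.mono (Icc_subset_Ici_self : Icc (0:ℝ) 1 ⊆ Ici 0)).integrableOn_Icc.mono_set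
      Ioc_subset_Icc_self
  have h2 : IntegrableOn (fun s : ℝ => s ^ m / (1 + la * s) ^ (p + 1)) (Ioi 1) := by
    have hint : IntegrableOn (fun s : ℝ => la⁻¹ ^ (p+1) * s ^ (-2 : ℝ)) (Ioi 1) :=
      (integrableOn_Ioi_rpow_of_lt (by norm_num) one_pos).const_mul _
    apply Integrable.mono' hint
    · exact (hcont.mono (show Ioi (1:ℝ) ⊆ Ici 0 from fun s (hs : (1:ℝ) < s) => show (0:ℝ) ≤ s from le_of_lt (lt_of_lt_of_le one_pos (le_of_lt hs)))).aestronglyMeasurable measurableSet_Ioi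
    · filter_upwards [ae_restrict_mem measurableSet_Ioi] with s hs
      have hs1 : (1:ℝ) ≤ s := le_of_lt hs
      have hs0 : (0:ℝ) < s := lt_of_lt_of_le one_pos hs1
      have hub : (1 + la * s) ^ (p+1) ≥ (la * s) ^ (p+1) := by
        apply pow_le_pow_left₀ (by positivity) (by linarith)
      rw [Real.norm_eq_abs, abs_of_nonneg (by positivity)]
      have : s ^ m / (1 + la * s) ^ (p + 1) ≤ s ^ m / (la * s) ^ (p+1) := by
        apply div_le_div_of_nonneg_left (by positivity) (by positivity) hub
      refine this.trans ?_
      have e1 : s ^ m / (la*s)^(p+1) = la⁻¹^(p+1) * s ^ ((m:ℝ) - (p+1)) := by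
        rw [rpow_sub hs0]
        rw [show ((p:ℝ)+1) = ((p+1:ℕ):ℝ) by push_cast; ring]
        rw [rpow_natCast, rpow_natCast, mul_pow]
        field_simp
        rw [one_div, ← mul_pow, mul_inv_cancel₀ hla.ne', one_pow]
      rw [e1]
      apply mul_le_mul_of_nonneg_left _ (by positivity)
      apply rpow_le_rpow_of_exponent_le hs1
      have hcast : (m:ℝ) + 1 ≤ (p:ℝ) := by exact_mod_cast h
      linarith
  rw [← Ioc_union_Ioi_eq_Ioi (le_of_lt one_pos)]
  exact h1.union h2

lemma key_int (la : ℝ) (hla : 0 < la) : ∀ m n : ℕ, m < n →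
    ∫ s in Ioi (0:ℝ), s ^ m / (1 + la * s) ^ (n + 1)
      = (m.factorial * (n - m - 1).factorial : ℝ) / (n.factorial * la ^ (m + 1)) := by
  intro m
  induction m with
  | zero =>
    intro n hn
    have hn0 : (0:ℝ) < n := by exact_mod_cast (show 0 < n by omega)
    have hpos : ∀ s : ℝ, 0 ≤ s → (0:ℝ) < 1 + la * s := fun s hs => by nlinarith
    have hderiv : ∀ s ∈ Ici (0:ℝ), HasDerivAt
        (fun s : ℝ => -((n:ℝ) * la)⁻¹ * ((1 + la * s) ^ n)⁻¹)
        (s ^ 0 / (1 + la * s) ^ (n + 1)) s := by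
      intro s hs
      have hu : HasDerivAt (fun s : ℝ => 1 + la * s) la s := by
        simpa using ((hasDerivAt_id s).const_mul la).const_add 1
      have h0 : (1 + la * s) ≠ 0 := ne_of_gt (hpos s hs)
      have := ((hu.pow n).inv (pow_ne_zero n h0)).const_mul (-((n:ℝ) * la)⁻¹)
      refine this.congr_deriv (Eq.symm ?_)
      rw [pow_zero]
      have hp : (1+la*s)^(n-1) * (1+la*s)^(n+1) = ((1+la*s)^n)^2 := by
        rw [← pow_add, ← pow_mul]; congr 1; omega
      simp only [Pi.pow_apply, Pi.inv_apply]
      obtain ⟨n', hn'⟩ : ∃ n', n = n' + 1 := ⟨n - 1, by omega⟩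
      simp only [hn', Nat.add_sub_cancel]
      field_simp
      ring
    have htend : Tendsto (fun s : ℝ => -((n:ℝ) * la)⁻¹ * ((1 + la * s) ^ n)⁻¹)
        atTop (nhds 0) := by
      rw [show (0:ℝ) = -((n:ℝ) * la)⁻¹ * 0 by ring]
      apply Tendsto.const_mul
      apply Tendsto.inv_tendsto_atTop
      apply (tendsto_pow_atTop (by omega : n ≠ 0)).comp
      exact tendsto_atTop_add_const_left _ 1 (Tendsto.const_mul_atTop hla tendsto_id)
    have := integral_Ioi_of_hasDerivAt_of_tendsto' hderiv
      (by simpa using integ_aux la hla 0 n hn) htend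
    rw [this]
    simp [Nat.factorial]
    rw [show n.factorial = n * (n-1).factorial from (Nat.mul_factorial_pred (by omega)).symm]
    push_cast
    field_simp
  | succ m ih =>
    intro n hn
    have hm : m < n - 1 := by omega
    have hIH := ih (n-1) hm
    rw [show (n-1) + 1 = n by omega] at hIH
    have hpos : ∀ s : ℝ, 0 ≤ s → (0:ℝ) < 1 + la * s := fun s hs => by nlinarith
    set g1 : ℝ → ℝ := fun s => s ^ m / (1 + la * s) ^ n with hg1
    set g2 : ℝ → ℝ := fun s => s ^ (m+1) / (1 + la * s) ^ (n + 1) with hg2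
    have hderiv : ∀ s ∈ Ici (0:ℝ), HasDerivAt
        (fun s : ℝ => s ^ (m+1) * ((1 + la * s) ^ n)⁻¹)
        ((m+1 : ℝ) * g1 s - (n:ℝ) * la * g2 s) s := by
      intro s hs
      have hu : HasDerivAt (fun s : ℝ => 1 + la * s) la s := by
        simpa using ((hasDerivAt_id s).const_mul la).const_add 1
      have h0 : (1 + la * s) ≠ 0 := ne_of_gt (hpos s hs)
      have := (hasDerivAt_pow (m+1) s).mul ((hu.pow n).inv (pow_ne_zero n h0))
      refine this.congr_deriv (Eq.symm ?_)
      simp only [hg1, hg2]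
      have hp : (1+la*s)^(n-1) * (1+la*s)^(n+1) = ((1+la*s)^n)^2 := by
        rw [← pow_add, ← pow_mul]; congr 1; omega
      push_cast
      simp only [Pi.pow_apply, Pi.inv_apply]
      obtain ⟨n', hn'⟩ : ∃ n', n = n' + 1 := ⟨n - 1, by omega⟩
      simp only [hn', Nat.add_sub_cancel]
      field_simp
      ring
    have htend : Tendsto (fun s : ℝ => s ^ (m+1) * ((1 + la * s) ^ n)⁻¹)
        atTop (nhds 0) := by
      have hub : ∀ᶠ s : ℝ in atTop, s ^ (m+1) * ((1 + la * s) ^ n)⁻¹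
          ≤ la⁻¹ ^ n * s ^ ((m+1 : ℤ) - n) := by
        filter_upwards [eventually_ge_atTop (1:ℝ)] with s hs1
        have hs0 : (0:ℝ) < s := lt_of_lt_of_le one_pos hs1
        have hub2 : (la * s) ^ n ≤ (1 + la * s) ^ n :=
          pow_le_pow_left₀ (by positivity) (by linarith) n
        calc s ^ (m+1) * ((1 + la * s) ^ n)⁻¹ ≤ s ^ (m+1) * ((la * s) ^ n)⁻¹ := by
              apply mul_le_mul_of_nonneg_left _ (by positivity)
              exact inv_anti₀ (by positivity) hub2
          _ = la⁻¹ ^ n * s ^ ((m+1 : ℤ) - n) := by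
              rw [zpow_sub₀ (ne_of_gt hs0),
                show ((m:ℤ)+1) = ((m+1:ℕ):ℤ) by push_cast; ring,
                zpow_natCast, zpow_natCast, mul_pow]
              field_simp
              rw [one_div, ← mul_pow, mul_inv_cancel₀ hla.ne', one_pow]
      have hlb : ∀ᶠ s : ℝ in atTop, 0 ≤ s ^ (m+1) * ((1 + la * s) ^ n)⁻¹ := by
        filter_upwards [eventually_ge_atTop (1:ℝ)] with s hs1
        have hs0 : (0:ℝ) < s := lt_of_lt_of_le one_pos hs1
        have := hpos s hs0.le
        positivity
      have hz : Tendsto (fun s : ℝ => la⁻¹ ^ n * s ^ ((m+1 : ℤ) - n)) atTop (nhds 0) := by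
        rw [show (0:ℝ) = la⁻¹ ^ n * 0 by ring]
        exact Tendsto.const_mul _ (tendsto_zpow_atTop_zero (by omega))
      exact tendsto_of_tendsto_of_tendsto_of_le_of_le' tendsto_const_nhds hz hlb hub
    have hint1 : IntegrableOn g1 (Ioi (0:ℝ)) := by
      have := integ_aux la hla m (n-1) hm
      rw [show (n-1) + 1 = n by omega] at this
      exact this
    have hint2 : IntegrableOn g2 (Ioi (0:ℝ)) := integ_aux la hla (m+1) n hn
    have hintd : IntegrableOn (fun s => (m+1 : ℝ) * g1 s - (n:ℝ) * la * g2 s) (Ioi (0:ℝ)) :=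
      (hint1.const_mul _).sub (hint2.const_mul _)
    have heq := integral_Ioi_of_hasDerivAt_of_tendsto' hderiv hintd htend
    rw [MeasureTheory.integral_sub (hint1.const_mul _) (hint2.const_mul _),
      integral_const_mul, integral_const_mul, hIH] at heq
    simp only [pow_succ, zero_mul, zero_pow, mul_zero, sub_zero, zero_div, mul_one,
      Nat.add_eq_zero, and_false, not_false_eq_true, ne_eq, one_ne_zero] at heq
    field_simp at heq
    have hfac : (n.factorial : ℝ) = n * (n-1).factorial := by
      exact_mod_cast congrArg (Nat.cast (R := ℝ)) (Nat.mul_factorial_pred (show n ≠ 0 by omega)).symm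
    rw [show (∫ s in Ioi (0:ℝ), s ^ (m+1) / (1 + la * s) ^ (n + 1)) = ∫ s in Ioi (0:ℝ), g2 s
      from rfl, Nat.factorial_succ, show n - (m+1) - 1 = n - 1 - m - 1 by omega, hfac]
    have hn0 : (0:ℝ) < (n:ℝ) := by exact_mod_cast (show 0 < n by omega)
    have h1 : (0:ℝ) < ((n-1).factorial : ℝ) := by positivity
    rw [eq_div_iff (by positivity)]
    push_cast
    linear_combination -heq

theorem stmt_16 (la : ℝ) (hla : 0 < la) (n k : ℕ) (hn : 2 ≤ n) (hk1 : 1 ≤ k)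
    (hk2 : k ≤ n - 1) :
    ∫ s in Set.Ioi (0:ℝ),
      s * ((k + 1) * n.choose (k + 1) * la ^ (n - k) * s ^ (n - k - 1) /
        (1 + la * s) ^ (n + 1))
      = ((n : ℝ) - k) / (la * k) := by
  have hkn : k + 1 ≤ n := by omega
  have hmlt : n - k < n := by omega
  have hkey := key_int la hla (n-k) n hmlt
  have hcong : Set.EqOn
      (fun s : ℝ => s * ((k + 1) * n.choose (k + 1) * la ^ (n - k) * s ^ (n - k - 1) /
        (1 + la * s) ^ (n + 1)))
      (fun s : ℝ => ((k+1 : ℝ) * n.choose (k+1) * la^(n-k)) *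
        (s ^ (n-k) / (1 + la*s)^(n+1))) (Set.Ioi 0) := by
    intro s _
    have hss : s * s ^ (n-k-1) = s ^ (n-k) := by
      rw [← pow_succ']
      congr 1; omega
    simp only
    rw [mul_div_assoc, ← mul_div_assoc, ← mul_div_assoc]
    congr 1
    rw [← hss]; ring
  rw [setIntegral_congr_fun measurableSet_Ioi hcong, integral_const_mul, hkey]
  have hch : ((n.choose (k+1)) : ℝ) * ((k+1).factorial) * ((n-k-1).factorial)
      = n.factorial := by exact_mod_cast Nat.choose_mul_factorial_mul_factorial hkn
  rw [show n - (n-k) - 1 = k - 1 by omega]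
  have hf1 : ((k+1).factorial : ℝ) = (k+1) * (k * ((k-1).factorial)) := by
    rw [Nat.factorial_succ]
    push_cast [(Nat.mul_factorial_pred (show k ≠ 0 by omega)).symm]
    ring
  have hf2 : ((n-k).factorial : ℝ) = (n-k : ℕ) * ((n-k-1).factorial) := by
    exact_mod_cast congrArg (Nat.cast (R := ℝ))
      (Nat.mul_factorial_pred (show n - k ≠ 0 by omega)).symm
  have hcast : ((n-k : ℕ) : ℝ) = (n:ℝ) - k := by push_cast [Nat.cast_sub (by omega : k ≤ n)]; ring
  have hk0 : (0:ℝ) < (k:ℝ) := by exact_mod_cast (show 0 < k by omega)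
  have hfp : (0:ℝ) < ((k-1).factorial : ℝ) := by positivity
  have hfp2 : (0:ℝ) < ((n-k-1).factorial : ℝ) := by positivity
  have hnf : (0:ℝ) < (n.factorial : ℝ) := by positivity
  have hne : ((n.choose (k+1)) : ℝ) ≠ 0 := by
    exact_mod_cast Nat.choose_pos hkn |>.ne'
  rw [← hch, hf1, hf2, hcast, pow_succ, mul_div_assoc']
  rw [div_eq_div_iff (by positivity) (by positivity)]
  ring
end

section
/- Let 0 < μ < λ, let n ≥ 2 be an integer, and let x₁ > x₂ > … > x_{n−1} > 0 be reals. Then the integral over t from x₁ to ∞ of [ (n−1)! · Π_{i=1}^{n−1} ( (λ−μ)^2 e^{−(λ−μ)x_i}/(λ − μ e^{−(λ−μ)x_i})^2 · (λ − μ e^{−(λ−μ)t})/(1 − e^{−(λ−μ)t}) ) ] · [ n λ^n (λ−μ)^2 (1−e^{−(λ−μ)t})^{n−1} e^{−(λ−μ)t}/(λ − μ e^{−(λ−μ)t})^{n+1} ] equals n! · λ^{n−1} · (λ−μ) · ( e^{−(λ−μ)x₁}/(λ − μ e^{−(λ−μ)x₁}) ) · Π_{i=1}^{n−1} ( (λ−μ)^2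 e^{−(λ−μ)x_i}/(λ − μ e^{−(λ−μ)x_i})^2 ). -/
open Real MeasureTheory Set Filter Topology

lemma key_int_s19 (la mu r a : ℝ) (hmu : 0 < mu) (hla : mu < la) (hr0 : 0 < r) (ha : 0 < a) :
    ∫ t in Set.Ioi a, exp (-r * t) / (la - mu * exp (-r * t)) ^ 2
      = exp (-r * a) / (r * la * (la - mu * exp (-r * a))) := by
  have hla0 : 0 < la := lt_trans hmu hla
  have hden : ∀ t : ℝ, 0 < t → 0 < la - mu * exp (-r * t) := by
    intro t ht
    have h1 : exp (-r * t) < 1 := by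
      calc exp (-r * t) < exp 0 := exp_lt_exp.mpr (by nlinarith)
        _ = 1 := exp_zero
    nlinarith [exp_pos (-r * t)]
  set F : ℝ → ℝ := fun t => -(mu * r)⁻¹ * (la - mu * exp (-r * t))⁻¹ with hF
  have hE : ∀ t : ℝ, HasDerivAt (fun s : ℝ => exp (-r * s)) (exp (-r * t) * -r) t := by
    intro t
    have h := (Real.hasDerivAt_exp (-r * t)).comp t ((hasDerivAt_id t).const_mul (-r))
    simpa [Function.comp_def] using h
  have halg : ∀ (E D : ℝ), D ≠ 0 →
      -(mu * r)⁻¹ * (-(0 - mu * (E * -r)) / D ^ 2) = E / D ^ 2 := by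
    intro E D hD
    have hmr : mu * r ≠ 0 := by positivity
    field_simp
    ring
  have hderiv : ∀ t ∈ Ioi a, HasDerivAt F (exp (-r * t) / (la - mu * exp (-r * t)) ^ 2) t := by
    intro t ht
    have htpos : 0 < t := lt_trans ha ht
    have hne : la - mu * exp (-r * t) ≠ 0 := ne_of_gt (hden t htpos)
    have h2 : HasDerivAt (fun s : ℝ => la - mu * exp (-r * s))
        (0 - mu * (exp (-r * t) * -r)) t :=
      (hasDerivAt_const t la).sub ((hE t).const_mul mu)
    have h3 := (h2.inv hne).const_mul (-(mu * r)⁻¹)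
    exact h3.congr_deriv (halg _ _ hne)
  have hcont : ContinuousWithinAt F (Ici a) a := by
    have hne : la - mu * exp (-r * a) ≠ 0 := ne_of_gt (hden a ha)
    have hc : ContinuousAt (fun t : ℝ => la - mu * exp (-r * t)) a := by fun_prop
    exact ContinuousAt.continuousWithinAt (continuousAt_const.mul (hc.inv₀ hne))
  have hf'int : IntegrableOn (fun t => exp (-r * t) / (la - mu * exp (-r * t)) ^ 2) (Ioi a) := by
    have hbase : IntegrableOn (fun t : ℝ => ((la - mu) ^ 2)⁻¹ * exp (-r * t)) (Ioi a) :=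
      (exp_neg_integrableOn_Ioi a hr0).const_mul _
    apply hbase.mono'
    · apply Measurable.aestronglyMeasurable
      apply Measurable.div
      · exact (measurable_id.const_mul (-r)).exp
      · exact (((measurable_id.const_mul (-r)).exp.const_mul mu).const_sub la).pow_const 2
    · filter_upwards [ae_restrict_mem measurableSet_Ioi] with t ht
      have htpos : 0 < t := lt_trans ha ht
      have h1 : exp (-r * t) ≤ 1 := by
        calc exp (-r * t) ≤ exp 0 := exp_le_exp.mpr (by nlinarith)
          _ = 1 := exp_zero
      have hD : la - mu ≤ la - mu * exp (-r * t) := by nlinarith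
      have hlm : 0 < la - mu := by linarith
      rw [Real.norm_eq_abs, abs_of_nonneg (by positivity), inv_mul_eq_div]
      apply div_le_div_of_nonneg_left (le_of_lt (exp_pos _)) (by positivity)
      nlinarith
  have hE0 : Tendsto (fun t : ℝ => exp (-r * t)) atTop (𝓝 0) := by
    have h1 : Tendsto (fun t : ℝ => -r * t) atTop atBot :=
      tendsto_id.const_mul_atTop_of_neg (by linarith)
    exact Real.tendsto_exp_atBot.comp h1
  have htend : Tendsto F atTop (𝓝 (-(mu * r)⁻¹ * la⁻¹)) := by
    have h1 : Tendsto (fun t : ℝ => la - mu * exp (-r * t)) atTop (𝓝 (la - mu * 0)) :=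
      (hE0.const_mul mu).const_sub la
    have h2 := (h1.inv₀ (by simp; linarith)).const_mul (-(mu * r)⁻¹)
    rw [mul_zero, sub_zero] at h2
    exact h2
  rw [integral_Ioi_of_hasDerivAt_of_tendsto hcont hderiv hf'int htend]
  have hne : la - mu * exp (-r * a) ≠ 0 := ne_of_gt (hden a ha)
  simp only [hF]
  obtain ⟨Ea, hEa⟩ : ∃ E, exp (-r * a) = E := ⟨_, rfl⟩
  rw [hEa] at hne ⊢
  have hr' : r ≠ 0 := ne_of_gt hr0
  have hmu' : mu ≠ 0 := ne_of_gt hmu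
  have hla' : la ≠ 0 := ne_of_gt hla0
  field_simp
  ring


theorem stmt_19 (la mu : ℝ) (hmu : 0 < mu) (hml : mu < la) (n : ℕ) (hn : 2 ≤ n)
    (x : ℕ → ℝ) (hpos : 0 < x (n - 1))
    (hsort : ∀ i, 1 ≤ i → i ≤ n - 2 → x (i + 1) < x i) :
    ∫ t in Set.Ioi (x 1),
      ((n - 1).factorial *
          ∏ i ∈ Finset.Icc 1 (n - 1),
            (la - mu) ^ 2 * exp (-(la - mu) * x i) / (la - mu * exp (-(la - mu) * x i)) ^ 2 *
              ((la - mu * exp (-(la - mu) * t)) / (1 - exp (-(la - mu) * t)))) *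
        (n * la ^ n * (la - mu) ^ 2 * (1 - exp (-(la - mu) * t)) ^ (n - 1) *
          exp (-(la - mu) * t) / (la - mu * exp (-(la - mu) * t)) ^ (n + 1))
      = n.factorial * la ^ (n - 1) * (la - mu) *
          (exp (-(la - mu) * x 1) / (la - mu * exp (-(la - mu) * x 1))) *
          ∏ i ∈ Finset.Icc 1 (n - 1),
            (la - mu) ^ 2 * exp (-(la - mu) * x i) / (la - mu * exp (-(la - mu) * x i)) ^ 2 := by
  have hr0 : 0 < la - mu := by linarith
  have hla0 : 0 < la := lt_trans hmu hml
  -- x 1 > 0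
  have hxle : ∀ d : ℕ, d ≤ n - 2 → x (n - 1) ≤ x (n - 1 - d) := by
    intro d
    induction d with
    | zero => intro _; simp
    | succ k ih =>
      intro hd
      have hk := ih (by omega)
      have h1 : x (n - 1 - k) < x (n - 2 - k) := by
        have h := hsort (n - 2 - k) (by omega) (by omega)
        have he : n - 2 - k + 1 = n - 1 - k := by omega
        rwa [he] at h
      have he2 : n - 1 - (k + 1) = n - 2 - k := by omega
      rw [he2]
      linarith
  have hx1 : 0 < x 1 := by
    have h := hxle (n - 2) (le_refl _)
    have he : n - 1 - (n - 2) = 1 := by omega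
    rw [he] at h
    linarith
  set P : ℝ := ∏ i ∈ Finset.Icc 1 (n - 1),
      (la - mu) ^ 2 * exp (-(la - mu) * x i) / (la - mu * exp (-(la - mu) * x i)) ^ 2 with hP
  set C : ℝ := (n - 1).factorial * P * (n * la ^ n * (la - mu) ^ 2) with hC
  have hcongr : ∀ t ∈ Ioi (x 1),
      ((n - 1).factorial *
          ∏ i ∈ Finset.Icc 1 (n - 1),
            (la - mu) ^ 2 * exp (-(la - mu) * x i) / (la - mu * exp (-(la - mu) * x i)) ^ 2 *
              ((la - mu * exp (-(la - mu) * t)) / (1 - exp (-(la - mu) * t)))) *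
        (n * la ^ n * (la - mu) ^ 2 * (1 - exp (-(la - mu) * t)) ^ (n - 1) *
          exp (-(la - mu) * t) / (la - mu * exp (-(la - mu) * t)) ^ (n + 1))
      = C * (exp (-(la - mu) * t) / (la - mu * exp (-(la - mu) * t)) ^ 2) := by
    intro t ht
    have htpos : 0 < t := lt_trans hx1 ht
    have hElt : exp (-(la - mu) * t) < 1 := by
      calc exp (-(la - mu) * t) < exp 0 := exp_lt_exp.mpr (by nlinarith)
        _ = 1 := exp_zero
    have hEpos : 0 < exp (-(la - mu) * t) := exp_pos _
    rw [Finset.prod_mul_distrib, Finset.prod_const, ← hP, Nat.card_Icc]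
    obtain ⟨E, hE⟩ : ∃ E, exp (-(la - mu) * t) = E := ⟨_, rfl⟩
    rw [hE] at hElt hEpos ⊢
    have h1E : (0:ℝ) < 1 - E := by linarith
    have hD : 0 < la - mu * E := by nlinarith
    have hcard : n - 1 + 1 - 1 = n - 1 := by omega
    rw [hcard, hC]
    have hpow : (la - mu * E) ^ (n + 1) = (la - mu * E) ^ (n - 1) * (la - mu * E) ^ 2 := by
      rw [← pow_add]; congr 1; omega
    have h1n : ((1:ℝ) - E) ^ (n - 1) ≠ 0 := pow_ne_zero _ (ne_of_gt h1E)
    have hDn : (la - mu * E) ≠ 0 := ne_of_gt hD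
    rw [hpow, div_pow]
    field_simp
  rw [setIntegral_congr_fun measurableSet_Ioi hcongr, integral_const_mul,
    key_int_s19 la mu (la - mu) (x 1) hmu hml hr0 hx1]
  obtain ⟨E1, hE1⟩ : ∃ E, exp (-(la - mu) * x 1) = E := ⟨_, rfl⟩
  have hE1lt : E1 < 1 := by
    rw [← hE1]
    calc exp (-(la - mu) * x 1) < exp 0 := exp_lt_exp.mpr (by nlinarith)
      _ = 1 := exp_zero
  have hE1pos : 0 < E1 := hE1 ▸ exp_pos _
  rw [hE1]
  have hD1 : (0:ℝ) < la - mu * E1 := by nlinarith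
  have hfact : (n : ℝ) * (n - 1).factorial = n.factorial := by
    have := Nat.mul_factorial_pred (show n ≠ 0 by omega)
    exact_mod_cast congrArg (Nat.cast : ℕ → ℝ) this
  have hlan : la ^ n = la ^ (n - 1) * la := by
    rw [← pow_succ]; congr 1; omega
  rw [hC, hlan]
  have hD1' : la - mu * E1 ≠ 0 := ne_of_gt hD1
  have hr' : la - mu ≠ 0 := ne_of_gt hr0
  have hla' : la ≠ 0 := ne_of_gt hla0
  field_simp
  rw [← hfact]; ring
end
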